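/- arXiv:2406.19919 — 8 statements merged into one kernel-verified Lean document; each statement's English description precedes it below -/
import Mathlib

section
/- For any scalar formal pseudo-differential series X = Σ_{i≤N} a_i D^i over a differential ring, the residue of X + X⁺ is a total derivative, i.e. res(X) + res(X⁺) ∈ Im D. -/
/-!
Formal pseudo-differential series over a commutative differential ring `(A, d)`.
A series `X = ∑_{i ≤ N} a_i D^i` is represented by its coefficient function
`ℤ → A` (the coefficient of `D^i`), with support bounded above.
-/

noncomputable section

/-- Generalized binomial coefficient `C(n, k)` for an integer `n`. -/
def gbinom (n : ℤ) (k : ℕ) : ℤ := Polynomial.eval n (descPochhammer ℤ k) / (k.factorial : ℤ)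

variable {A : Type*} [CommRing A]

/-- Support of a coefficient function is bounded above: genuine pseudo-differential series. -/
def PDSBdd (X : ℤ → A) : Prop := ∃ N : ℤ, ∀ i : ℤ, N < i → X i = 0

/-- Product of pseudo-differential series, induced by the extended Leibniz rule
`D^i ∘ a = ∑_{k ≥ 0} C(i,k) d^k(a) D^{i-k}`. -/
def pdsMul (d : A → A) (X Y : ℤ → A) : ℤ → A := fun n =>
  ∑ᶠ p : ℤ × ℕ, gbinom p.1 p.2 • (X p.1 * d^[p.2] (Y (n - p.1 + p.2)))

/-- The unit series `1 = D^0`. -/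
def pdsOne : ℤ → A := fun n => if n = 0 then 1 else 0

/-- Formal conjugate `X⁺ = ∑ (−D)^i ∘ a_i`. -/
def pdsConj (d : A → A) (X : ℤ → A) : ℤ → A := fun n =>
  ∑ᶠ k : ℕ, (((-1 : ℤˣ) ^ (n + (k : ℤ)) : ℤˣ) : ℤ) •
    (gbinom (n + k) k • d^[k] (X (n + k)))

/-- The residue: the coefficient of `D^{-1}`. -/
def pdsRes (X : ℤ → A) : A := X (-1)


lemma gbinom_neg_one_add (k : ℕ) (hk : k ≠ 0) : gbinom (-1 + k) k = 0 := by
  obtain ⟨m, rfl⟩ := Nat.exists_eq_succ_of_ne_zero hk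
  unfold gbinom
  rw [descPochhammer_succ_right]
  push_cast
  rw [show (-1 : ℤ) + (m + 1) = m by ring]
  simp

/-- for any scalar formal pseudo-differential series `X`,
`res(X + X⁺)` is a total derivative. -/
theorem res_add_conj_mem_range_d (d : Derivation ℤ A A) (X : ℤ → A) (hX : PDSBdd X) :
    pdsRes (X + pdsConj (⇑d) X) ∈ Set.range (⇑d) := by
  have hconj : pdsConj (⇑d) X (-1) = -X (-1) := by
    unfold pdsConj
    rw [finsum_eq_single _ 0]
    · simp [gbinom]
    · intro k hk
      rw [gbinom_neg_one_add k hk]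
      simp
  refine ⟨0, ?_⟩
  simp [pdsRes, hconj]

end
end

section
/- For any two scalar formal pseudo-differential series A and B over a differential ring, the residue of the commutator [A,B] = AB − BA is a total derivative: res([A,B]) ∈ Im D. -/
/-!
Formal pseudo-differential series over a commutative differential ring `(A, d)`.
A series `X = ∑_{i ≤ N} a_i D^i` is represented by its coefficient function
`ℤ → A` (the coefficient of `D^i`), with support bounded above.
-/

noncomputable section

variable {A : Type*} [CommRing A]

/-- Powers of a pseudo-differential series. -/
def pdsPow (d : A → A) (X : ℤ → A) : ℕ → ℤ → A
  | 0 => pdsOne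
  | n + 1 => pdsMul d (pdsPow d X n) X

/-! ### Auxiliary lemmas -/

lemma factorial_dvd_descPochhammer_eval' (n : ℤ) (k : ℕ) :
    (k.factorial : ℤ) ∣ (descPochhammer ℤ k).eval n := by
  rw [Polynomial.eval_eq_smeval, Ring.descPochhammer_eq_factorial_smul_choose]
  exact ⟨Ring.choose n k, by rw [nsmul_eq_mul]⟩

lemma descPochhammer_eval_aux' (k : ℕ) (x : ℤ) :
    x * (descPochhammer ℤ k).eval (x - 1) = (descPochhammer ℤ k).eval x * (x - k) := by
  calc x * (descPochhammer ℤ k).eval (x - 1)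
      = (descPochhammer ℤ (k + 1)).eval x := by
        rw [descPochhammer_succ_left]
        simp [Polynomial.eval_comp]
    _ = (descPochhammer ℤ k).eval x * (x - k) := descPochhammer_succ_eval k x

lemma descPochhammer_eval_reflect' (i : ℤ) (k : ℕ) :
    (descPochhammer ℤ k).eval ((k : ℤ) - 1 - i) = (-1) ^ k * (descPochhammer ℤ k).eval i := by
  induction k generalizing i with
  | zero => simp
  | succ k ih =>
    rw [descPochhammer_succ_eval, descPochhammer_succ_eval]
    have e1 : ((k : ℤ) + 1) - 1 - i = (k : ℤ) - 1 - (i - 1) := by ring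
    push_cast
    rw [e1, ih (i - 1)]
    have haux := descPochhammer_eval_aux' k i
    linear_combination ((-1 : ℤ)) ^ (k + 1) * haux

lemma gbinom_reflect' (i : ℤ) (k : ℕ) :
    gbinom ((k : ℤ) - 1 - i) k = (-1) ^ k * gbinom i k := by
  unfold gbinom
  rw [descPochhammer_eval_reflect', Int.mul_ediv_assoc _ (factorial_dvd_descPochhammer_eval' i k)]

lemma d_iter_zero' (d : Derivation ℤ A A) (k : ℕ) : (⇑d)^[k] (0 : A) = 0 := by
  induction k with
  | zero => rfl
  | succ k ih => rw [Function.iterate_succ_apply, map_zero, ih]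

lemma d_telescope' (d : Derivation ℤ A A) (k : ℕ) (a b : A) :
    a * (⇑d)^[k] b - (-1 : ℤ) ^ k • (b * (⇑d)^[k] a)
      = d (∑ r ∈ Finset.range k, (-1 : ℤ) ^ r • ((⇑d)^[r] a * (⇑d)^[k - 1 - r] b)) := by
  induction k generalizing a with
  | zero => simp [mul_comm]
  | succ k ih =>
    have hsum : ∑ r ∈ Finset.range (k + 1),
          (-1 : ℤ) ^ r • ((⇑d)^[r] a * (⇑d)^[k + 1 - 1 - r] b)
        = a * (⇑d)^[k] b
          - ∑ r ∈ Finset.range k, (-1 : ℤ) ^ r • ((⇑d)^[r] (d a) * (⇑d)^[k - 1 - r] b) := by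
      calc ∑ r ∈ Finset.range (k + 1), (-1 : ℤ) ^ r • ((⇑d)^[r] a * (⇑d)^[k + 1 - 1 - r] b)
          = (∑ r ∈ Finset.range k,
              (-1 : ℤ) ^ (r + 1) • ((⇑d)^[r + 1] a * (⇑d)^[k + 1 - 1 - (r + 1)] b))
            + (-1 : ℤ) ^ 0 • ((⇑d)^[0] a * (⇑d)^[k + 1 - 1 - 0] b) :=
          Finset.sum_range_succ' _ k
        _ = a * (⇑d)^[k] b
            - ∑ r ∈ Finset.range k, (-1 : ℤ) ^ r • ((⇑d)^[r] (d a) * (⇑d)^[k - 1 - r] b) := by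
          rw [sub_eq_add_neg, add_comm, ← Finset.sum_neg_distrib]
          congr 1
          · simp
          · refine Finset.sum_congr rfl fun r _ => ?_
            rw [show k + 1 - 1 - (r + 1) = k - 1 - r by omega, Function.iterate_succ_apply]
            simp only [zsmul_eq_mul, Int.cast_pow, Int.cast_neg, Int.cast_one]
            ring
    rw [hsum, map_sub, ← ih (d a), Derivation.leibniz, smul_eq_mul, smul_eq_mul,
      ← Function.iterate_succ_apply' d k b, ← Function.iterate_succ_apply d k a]
    simp only [zsmul_eq_mul, Int.cast_pow, Int.cast_neg, Int.cast_one]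
    ring

/-- the residue of a commutator of pseudo-differential series
is a total derivative (Adler's trace property). -/
theorem res_commutator_mem_range_d (d : Derivation ℤ A A) (X Y : ℤ → A)
    (hX : PDSBdd X) (hY : PDSBdd Y) :
    pdsRes (pdsMul (⇑d) X Y - pdsMul (⇑d) Y X) ∈ Set.range (⇑d) := by
  obtain ⟨NX, hX⟩ := hX
  obtain ⟨NY, hY⟩ := hY
  set f : ℤ × ℕ → A :=
    fun p => gbinom p.1 p.2 • (X p.1 * (⇑d)^[p.2] (Y (-1 - p.1 + p.2))) with hfdef
  set g : ℤ × ℕ → A :=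
    fun p => gbinom p.1 p.2 • (Y p.1 * (⇑d)^[p.2] (X (-1 - p.1 + p.2))) with hgdef
  set h : ℤ × ℕ → A := fun p => gbinom p.1 p.2 •
      (∑ r ∈ Finset.range p.2,
        (-1 : ℤ) ^ r • ((⇑d)^[r] (X p.1) * (⇑d)^[p.2 - 1 - r] (Y (-1 - p.1 + p.2)))) with hhdef
  set σ : ℤ × ℕ ≃ ℤ × ℕ :=
    { toFun := fun p => ((p.2 : ℤ) - 1 - p.1, p.2)
      invFun := fun p => ((p.2 : ℤ) - 1 - p.1, p.2)
      left_inv := fun p => by simp [Prod.ext_iff]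
      right_inv := fun p => by simp [Prod.ext_iff] } with hσdef
  -- σ-transformed second summand
  have hg2 : ∀ p : ℤ × ℕ, g (σ p) =
      ((-1 : ℤ) ^ p.2 * gbinom p.1 p.2) • (Y ((p.2 : ℤ) - 1 - p.1) * (⇑d)^[p.2] (X p.1)) := by
    intro p
    show gbinom ((p.2 : ℤ) - 1 - p.1) p.2 •
        (Y ((p.2 : ℤ) - 1 - p.1) * (⇑d)^[p.2] (X (-1 - ((p.2 : ℤ) - 1 - p.1) + p.2))) = _
    rw [show (-1 - ((p.2 : ℤ) - 1 - p.1) + p.2) = p.1 by ring, gbinom_reflect']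
  -- the key pointwise identity
  have key : ∀ p : ℤ × ℕ, f p - g (σ p) = d (h p) := by
    intro p
    rw [hg2 p, hfdef, hhdef]
    simp only
    rw [mul_comm ((-1 : ℤ) ^ p.2), mul_smul, ← smul_sub,
      show (-1 - p.1 + (p.2 : ℤ)) = (p.2 : ℤ) - 1 - p.1 by ring,
      d_telescope' d p.2 (X p.1) (Y ((p.2 : ℤ) - 1 - p.1)), ← map_zsmul d]
  -- the common finite enveloping set for all supports
  set S : Set (ℤ × ℕ) := {p | p.1 ≤ NX ∧ (p.2 : ℤ) ≤ NY + 1 + p.1} with hSdef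
  have hSfin : S.Finite := by
    apply Set.Finite.subset
      (Finset.finite_toSet (Finset.Icc (-1 - NY) NX ×ˢ Finset.range (NX + NY + 2).toNat))
    rintro ⟨i, k⟩ ⟨h1, h2⟩
    simp only [Finset.coe_product, Set.mem_prod, Finset.mem_coe, Finset.mem_Icc,
      Finset.mem_range]
    refine ⟨⟨by omega, h1⟩, ?_⟩
    rw [Int.lt_toNat]
    omega
  have hmem : ∀ p : ℤ × ℕ, X p.1 ≠ 0 → Y ((p.2 : ℤ) - 1 - p.1) ≠ 0 → p ∈ S := by
    intro p hx hy
    constructor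
    · by_contra hc
      exact hx (hX _ (by omega))
    · by_contra hc
      exact hy (hY _ (by omega))
  have hfs : Function.support f ⊆ S := by
    intro p hp
    refine hmem p (fun hx => hp ?_) (fun hy => hp ?_)
    · simp [hfdef, hx]
    · rw [hfdef]
      simp only
      rw [show (-1 - p.1 + (p.2 : ℤ)) = (p.2 : ℤ) - 1 - p.1 by ring, hy,
        d_iter_zero' d p.2, mul_zero, smul_zero]
  have hgs : Function.support (fun p => g (σ p)) ⊆ S := by
    intro p hp
    refine hmem p (fun hx => hp ?_) (fun hy => hp ?_)
    · simp [hg2 p, hx, d_iter_zero' d p.2]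
    · simp [hg2 p, hy]
  have hhs : Function.support h ⊆ S := by
    intro p hp
    refine hmem p (fun hx => hp ?_) (fun hy => hp ?_)
    · simp [hhdef, hx, d_iter_zero' d]
    · rw [hhdef]
      simp only
      rw [show (-1 - p.1 + (p.2 : ℤ)) = (p.2 : ℤ) - 1 - p.1 by ring, hy]
      simp [d_iter_zero' d]
  refine ⟨∑ᶠ p, h p, ?_⟩
  have step1 : d (∑ᶠ p, h p) = ∑ᶠ p, d (h p) :=
    AddMonoidHom.map_finsum (d : A →ₗ[ℤ] A).toAddMonoidHom (hSfin.subset hhs)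
  have step2 : (∑ᶠ p, d (h p)) = ∑ᶠ p, (f p - g (σ p)) := by
    exact finsum_congr fun p => (key p).symm
  have step3 : (∑ᶠ p, (f p - g (σ p))) = (∑ᶠ p, f p) - ∑ᶠ p, g (σ p) :=
    finsum_sub_distrib (hSfin.subset hfs) (hSfin.subset hgs)
  have step4 : (∑ᶠ p, g (σ p)) = ∑ᶠ p, g p := finsum_comp_equiv σ
  rw [step1, step2, step3, step4]
  rfl


end
end

section
/- Let R and S be scalar formal pseudo-differential series over a differential ring with S invertible, and set R₂ = − S^{-1} R⁺ S. Then for every integer j ≥ 1, res(R^j) + (−1)^j res(R₂^j) ∈ Im D. -/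
/-!
Formal pseudo-differential series over a commutative differential ring `(A, d)`.
A series `X = ∑_{i ≤ N} a_i D^i` is represented by its coefficient function
`ℤ → A` (the coefficient of `D^i`), with support bounded above.
-/

noncomputable section

variable {A : Type*} [CommRing A]

lemma gbinom_eq_choose (n : ℤ) (k : ℕ) : gbinom n k = Ring.choose n k := by
  unfold gbinom
  rw [Polynomial.eval_eq_smeval, Ring.descPochhammer_eq_factorial_smul_choose, nsmul_eq_mul,
    Int.mul_ediv_cancel_left _ (by exact_mod_cast k.factorial_ne_zero)]

lemma gbinom_zero_right (n : ℤ) : gbinom n 0 = 1 := by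
  rw [gbinom_eq_choose, Ring.choose_zero_right]

lemma gbinom_natCast (n k : ℕ) : gbinom (n : ℤ) k = n.choose k := by
  rw [gbinom_eq_choose, Ring.choose_natCast]

lemma gbinom_zero_pos (k : ℕ) (hk : 0 < k) : gbinom 0 k = 0 := by
  rw [gbinom_eq_choose, Ring.choose_zero_pos ℤ hk]

lemma gbinom_add (x y : ℤ) (k : ℕ) :
    gbinom (x + y) k = ∑ v ∈ Finset.range (k + 1), gbinom x v * gbinom y (k - v) := by
  rw [gbinom_eq_choose, Ring.add_choose_eq k (Commute.all x y),
    Finset.Nat.sum_antidiagonal_eq_sum_range_succ_mk]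
  simp [gbinom_eq_choose]

lemma gbinom_trinom (x : ℤ) (a t : ℕ) :
    ((a + t).choose a : ℤ) * gbinom x (a + t) = gbinom x a * gbinom (x - a) t := by
  have h := Ring.choose_smul_choose x (n := a + t) (k := a) (Nat.le_add_right a t)
  rw [Nat.add_sub_cancel_left] at h
  simp only [gbinom_eq_choose, nsmul_eq_mul] at *
  exact h

lemma descPochhammer_eval_neg' (x : ℤ) (k : ℕ) :
    (descPochhammer ℤ k).eval (-x) = (-1) ^ k * (descPochhammer ℤ k).eval (x + k - 1) := by
  rw [descPochhammer_eval_eq_ascPochhammer, show -x - k + 1 = -(x + k - 1) by ring,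
    ascPochhammer_eval_neg_eq_descPochhammer]

lemma gbinom_neg (x : ℤ) (k : ℕ) : gbinom (-x) k = (-1) ^ k * gbinom (x + k - 1) k := by
  unfold gbinom
  rw [descPochhammer_eval_neg']
  have hdvd : (k.factorial : ℤ) ∣ (descPochhammer ℤ k).eval (x + k - 1) := by
    rw [Polynomial.eval_eq_smeval, Ring.descPochhammer_eq_factorial_smul_choose, nsmul_eq_mul]
    exact Dvd.intro _ rfl
  rw [Int.mul_ediv_assoc _ hdvd]




variable (d : Derivation ℤ A A)



lemma sum_support_eq {α M : Type*} [AddCommMonoid M] [DecidableEq α]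
    {f : α → M} {s t : Finset α} (hs : ∀ i, f i ≠ 0 → i ∈ s) (ht : ∀ i, f i ≠ 0 → i ∈ t) :
    ∑ i ∈ s, f i = ∑ i ∈ t, f i := by
  have h1 : ∑ i ∈ s, f i = ∑ i ∈ s ∪ t, f i :=
    Finset.sum_subset Finset.subset_union_left
      (fun x _ hx => by by_contra h; exact hx (hs x h))
  have h2 : ∑ i ∈ t, f i = ∑ i ∈ s ∪ t, f i :=
    Finset.sum_subset Finset.subset_union_right
      (fun x _ hx => by by_contra h; exact hx (ht x h))
  rw [h1, h2]

def sgn (z : ℤ) : ℤ := ((-1 : ℤˣ) ^ z : ℤˣ)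

lemma sgn_add (a b : ℤ) : sgn (a + b) = sgn a * sgn b := by
  unfold sgn; rw [zpow_add]; exact Units.val_mul _ _

lemma sgn_natCast (k : ℕ) : sgn (k : ℤ) = (-1) ^ k := by
  unfold sgn; rw [zpow_natCast]; push_cast; ring

lemma sgn_zero : sgn 0 = 1 := by unfold sgn; simp

lemma sgn_mul_self (a : ℤ) : sgn a * sgn a = 1 := by
  unfold sgn; rw [← Units.val_mul, Int.units_mul_self]; rfl

lemma sgn_neg_one : sgn (-1) = -1 := by
  have h1 : sgn (-1) * sgn 1 = 1 := by
    rw [← sgn_add]; norm_num [sgn_zero]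
  have h2 : sgn 1 = -1 := by
    have := sgn_natCast 1; simpa using this
  rw [h2] at h1; omega


lemma dIter_zero (k : ℕ) : (⇑d)^[k] (0 : A) = 0 := by
  induction k with
  | zero => rfl
  | succ k ih => rw [Function.iterate_succ_apply, map_zero, ih]

lemma dIter_add (k : ℕ) (a b : A) : (⇑d)^[k] (a + b) = (⇑d)^[k] a + (⇑d)^[k] b := by
  induction k generalizing a b with
  | zero => rfl
  | succ k ih => rw [Function.iterate_succ_apply, map_add, ih, Function.iterate_succ_apply,
      Function.iterate_succ_apply]

lemma dIter_zsmul (k : ℕ) (c : ℤ) (a : A) : (⇑d)^[k] (c • a) = c • (⇑d)^[k] a := by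
  induction k generalizing a with
  | zero => rfl
  | succ k ih => rw [Function.iterate_succ_apply, d.map_smul, ih, Function.iterate_succ_apply]

lemma dIter_sum {ι : Type*} (k : ℕ) (s : Finset ι) (f : ι → A) :
    (⇑d)^[k] (∑ i ∈ s, f i) = ∑ i ∈ s, (⇑d)^[k] (f i) := by
  classical
  induction s using Finset.induction with
  | empty => simp [dIter_zero]
  | insert _ _ h ih => rw [Finset.sum_insert h, Finset.sum_insert h, dIter_add, ih]

lemma dIter_ne_zero {k : ℕ} {a : A} (h : (⇑d)^[k] a ≠ 0) : a ≠ 0 := by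
  rintro rfl; exact h (dIter_zero d k)

lemma dIter_one {k : ℕ} (h : k ≠ 0) : (⇑d)^[k] (1 : A) = 0 := by
  obtain ⟨k, rfl⟩ := Nat.exists_eq_succ_of_ne_zero h
  rw [Function.iterate_succ_apply, Derivation.map_one_eq_zero, dIter_zero]

lemma dIter_leibniz (k : ℕ) (a b : A) :
    (⇑d)^[k] (a * b) =
      ∑ u ∈ Finset.range (k + 1), (k.choose u : ℤ) • ((⇑d)^[u] a * (⇑d)^[k - u] b) := by
  induction k with
  | zero => simp
  | succ k ih =>
    rw [Function.iterate_succ_apply', ih, map_sum]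
    have hterm : ∀ u ∈ Finset.range (k + 1),
        d ((k.choose u : ℤ) • ((⇑d)^[u] a * (⇑d)^[k - u] b)) =
          (k.choose u : ℤ) • ((⇑d)^[u] a * (⇑d)^[(k - u) + 1] b)
          + (k.choose u : ℤ) • ((⇑d)^[u + 1] a * (⇑d)^[k - u] b) := by
      intro u _
      rw [d.map_smul, Derivation.leibniz, smul_eq_mul, smul_eq_mul,
        Function.iterate_succ_apply', Function.iterate_succ_apply', smul_add]
      congr 1
      rw [mul_comm]
    rw [Finset.sum_congr rfl hterm, Finset.sum_add_distrib]
    have h1 : ∑ u ∈ Finset.range (k + 1), (k.choose u : ℤ) • ((⇑d)^[u] a * (⇑d)^[(k - u) + 1] b)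
        = (∑ i ∈ Finset.range (k + 1),
            (k.choose (i + 1) : ℤ) • ((⇑d)^[i + 1] a * (⇑d)^[k - i] b))
          + a * (⇑d)^[k + 1] b := by
      have hext : ∑ i ∈ Finset.range (k + 1),
          (k.choose (i + 1) : ℤ) • ((⇑d)^[i + 1] a * (⇑d)^[k - i] b)
          = ∑ i ∈ Finset.range k,
            (k.choose (i + 1) : ℤ) • ((⇑d)^[i + 1] a * (⇑d)^[k - i] b) := by
        rw [Finset.sum_range_succ]
        simp [Nat.choose_succ_self]
      rw [Finset.sum_range_succ'
        (fun u => (k.choose u : ℤ) • ((⇑d)^[u] a * (⇑d)^[(k - u) + 1] b)) k, hext]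
      congr 1
      · refine Finset.sum_congr rfl fun i hi => ?_
        have : k - (i + 1) + 1 = k - i := by
          have := Finset.mem_range.mp hi; omega
        rw [this]
      · simp
    rw [h1]
    -- now handle RHS
    have hR : ∑ u ∈ Finset.range (k + 2),
        ((k+1).choose u : ℤ) • ((⇑d)^[u] a * (⇑d)^[k + 1 - u] b)
        = (∑ i ∈ Finset.range (k + 1), (k.choose i : ℤ) • ((⇑d)^[i + 1] a * (⇑d)^[k - i] b))
          + (∑ i ∈ Finset.range (k + 1),
              (k.choose (i + 1) : ℤ) • ((⇑d)^[i + 1] a * (⇑d)^[k - i] b))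
          + a * (⇑d)^[k + 1] b := by
      rw [Finset.sum_range_succ'
        (fun u => ((k+1).choose u : ℤ) • ((⇑d)^[u] a * (⇑d)^[k + 1 - u] b)) (k + 1)]
      have : ∀ i ∈ Finset.range (k + 1),
          ((k+1).choose (i + 1) : ℤ) • ((⇑d)^[i + 1] a * (⇑d)^[k + 1 - (i + 1)] b)
          = (k.choose i : ℤ) • ((⇑d)^[i + 1] a * (⇑d)^[k - i] b)
            + (k.choose (i + 1) : ℤ) • ((⇑d)^[i + 1] a * (⇑d)^[k - i] b) := by
        intro i hi
        have hsub : k + 1 - (i + 1) = k - i := by omega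
        rw [hsub, Nat.choose_succ_succ, Nat.cast_add, add_smul]
      rw [Finset.sum_congr rfl this, Finset.sum_add_distrib]
      simp only [Nat.choose_zero_right, Nat.cast_one, one_smul, Function.iterate_zero_apply,
        Nat.sub_zero]
    rw [hR]
    abel

lemma range_d_add {x y : A} (hx : x ∈ Set.range ⇑d) (hy : y ∈ Set.range ⇑d) :
    x + y ∈ Set.range ⇑d := by
  obtain ⟨u, rfl⟩ := hx; obtain ⟨v, rfl⟩ := hy; exact ⟨u + v, map_add d u v⟩

lemma range_d_zero : (0 : A) ∈ Set.range ⇑d := ⟨0, map_zero d⟩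

lemma range_d_zsmul (c : ℤ) {x : A} (hx : x ∈ Set.range ⇑d) : c • x ∈ Set.range ⇑d := by
  obtain ⟨u, rfl⟩ := hx; exact ⟨c • u, d.map_smul c u⟩

lemma range_d_neg {x : A} (hx : x ∈ Set.range ⇑d) : -x ∈ Set.range ⇑d := by
  have := range_d_zsmul d (-1) hx; simpa using this

lemma range_d_sum {ι : Type*} {s : Finset ι} {f : ι → A} (h : ∀ i ∈ s, f i ∈ Set.range ⇑d) :
    ∑ i ∈ s, f i ∈ Set.range ⇑d := by
  classical
  induction s using Finset.induction with
  | empty => simpa using range_d_zero d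
  | insert _ _ hne ih =>
    rename_i a s
    rw [Finset.sum_insert hne]
    exact range_d_add d (h a (Finset.mem_insert_self a s))
      (ih fun i hi => h i (Finset.mem_insert_of_mem hi))

lemma ibp (k : ℕ) (a b : A) :
    a * (⇑d)^[k] b - ((-1 : ℤ) ^ k) • ((⇑d)^[k] a * b) ∈ Set.range ⇑d := by
  induction k generalizing a b with
  | zero => simpa using range_d_zero d
  | succ k ih =>
    have hdab : d (a * (⇑d)^[k] b) = a * (⇑d)^[k + 1] b + d a * (⇑d)^[k] b := by
      rw [Derivation.leibniz, smul_eq_mul, smul_eq_mul, Function.iterate_succ_apply']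
      ring
    have key : a * (⇑d)^[k + 1] b - ((-1 : ℤ) ^ (k + 1)) • ((⇑d)^[k + 1] a * b)
        = d (a * (⇑d)^[k] b)
          + -(d a * (⇑d)^[k] b - ((-1 : ℤ) ^ k) • ((⇑d)^[k] (d a) * b)) := by
      rw [hdab, show (⇑d)^[k + 1] a = (⇑d)^[k] (d a) from Function.iterate_succ_apply ⇑d k a]
      simp only [zsmul_eq_mul]
      push_cast
      ring
    rw [key]
    exact range_d_add d ⟨_, rfl⟩ (range_d_neg d (ih (d a) b))

lemma pdsMul_eq_sum (X Y : ℤ → A) (n : ℤ) (s : Finset (ℤ × ℕ))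
    (h : ∀ p : ℤ × ℕ, gbinom p.1 p.2 ≠ 0 → X p.1 ≠ 0 →
      (⇑d)^[p.2] (Y (n - p.1 + p.2)) ≠ 0 → p ∈ s) :
    pdsMul ⇑d X Y n = ∑ p ∈ s, gbinom p.1 p.2 • (X p.1 * (⇑d)^[p.2] (Y (n - p.1 + p.2))) := by
  apply finsum_eq_sum_of_support_subset
  intro p hp
  rw [Function.mem_support] at hp
  refine Finset.mem_coe.mpr (h p ?_ ?_ ?_) <;> intro h0 <;> apply hp <;> simp [h0]

lemma pdsConj_eq_sum (X : ℤ → A) (n : ℤ) (s : Finset ℕ)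
    (h : ∀ k : ℕ, gbinom (n + k) k ≠ 0 → (⇑d)^[k] (X (n + k)) ≠ 0 → k ∈ s) :
    pdsConj ⇑d X n = ∑ k ∈ s,
      sgn (n + k) • (gbinom (n + k) k • (⇑d)^[k] (X (n + k))) := by
  apply finsum_eq_sum_of_support_subset
  intro k hk
  rw [Function.mem_support] at hk
  refine Finset.mem_coe.mpr (h k ?_ ?_) <;> intro h0 <;> apply hk <;> simp [h0]

lemma pdsMul_bdd {X Y : ℤ → A} {Nx Ny : ℤ} (hX : ∀ i, Nx < i → X i = 0)
    (hY : ∀ i, Ny < i → Y i = 0) : ∀ n, Nx + Ny < n → pdsMul ⇑d X Y n = 0 := by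
  intro n hn
  rw [pdsMul_eq_sum d X Y n ∅ ?_, Finset.sum_empty]
  rintro ⟨i, k⟩ - hXi hYd
  exfalso
  have h1 : i ≤ Nx := by by_contra h; exact hXi (hX _ (by omega))
  have h2 : n - i + k ≤ Ny := by
    by_contra h; exact hYd (by rw [hY _ (by omega), dIter_zero])
  omega

lemma pdsConj_bdd {X : ℤ → A} {Nx : ℤ} (hX : ∀ i, Nx < i → X i = 0) :
    ∀ n, Nx < n → pdsConj ⇑d X n = 0 := by
  intro n hn
  rw [pdsConj_eq_sum d X n ∅ ?_, Finset.sum_empty]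
  rintro k - hXd
  exfalso
  exact hXd (by rw [hX _ (by omega), dIter_zero])

lemma PDSBdd.mul {X Y : ℤ → A} (hX : PDSBdd X) (hY : PDSBdd Y) : PDSBdd (pdsMul ⇑d X Y) := by
  obtain ⟨Nx, hX⟩ := hX; obtain ⟨Ny, hY⟩ := hY
  exact ⟨Nx + Ny, pdsMul_bdd d hX hY⟩

lemma PDSBdd.conj {X : ℤ → A} (hX : PDSBdd X) : PDSBdd (pdsConj ⇑d X) := by
  obtain ⟨Nx, hX⟩ := hX
  exact ⟨Nx, pdsConj_bdd d hX⟩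

lemma PDSBdd.one : PDSBdd (pdsOne : ℤ → A) :=
  ⟨0, fun i hi => by unfold pdsOne; rw [if_neg (by omega)]⟩

lemma PDSBdd.pow {X : ℤ → A} (hX : PDSBdd X) (j : ℕ) : PDSBdd (pdsPow ⇑d X j) := by
  induction j with
  | zero => exact PDSBdd.one
  | succ j ih => exact ih.mul d hX

lemma PDSBdd.zsmul {X : ℤ → A} (c : ℤ) (hX : PDSBdd X) : PDSBdd (c • X) := by
  obtain ⟨Nx, hX⟩ := hX
  exact ⟨Nx, fun i hi => by simp [Pi.smul_apply, hX i hi]⟩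

lemma pdsOne_mul (X : ℤ → A) : pdsMul ⇑d pdsOne X = X := by
  funext n
  rw [pdsMul_eq_sum d pdsOne X n {((0 : ℤ), (0 : ℕ))} ?_]
  · simp [pdsOne, gbinom_zero_right]
  · rintro ⟨i, k⟩ hg h1 -
    have hi : i = 0 := by
      by_contra h; exact h1 (by unfold pdsOne; rw [if_neg h])
    subst hi
    have hk : k = 0 := by
      by_contra h; exact hg (gbinom_zero_pos k (Nat.pos_of_ne_zero h))
    subst hk; simp

lemma pdsMul_one (X : ℤ → A) : pdsMul ⇑d X pdsOne = X := by
  funext n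
  rw [pdsMul_eq_sum d X pdsOne n {((n : ℤ), (0 : ℕ))} ?_]
  · simp [pdsOne, gbinom_zero_right]
  · rintro ⟨i, k⟩ - - hd
    have h1 : n - i + k = 0 := by
      by_contra h
      exact hd (by unfold pdsOne; rw [if_neg h, dIter_zero])
    have hk : k = 0 := by
      by_contra h
      exact hd (by
        have : pdsOne (n - i + (k : ℤ)) = (1 : A) := by unfold pdsOne; rw [if_pos h1]
        rw [this, dIter_one d h])
    subst hk
    have h1' : i = n := by push_cast at h1; omega
    simp [h1']

lemma pdsMul_zsmul_left {X Y : ℤ → A} (c : ℤ) (hX : PDSBdd X) (hY : PDSBdd Y) :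
    pdsMul ⇑d (c • X) Y = c • pdsMul ⇑d X Y := by
  obtain ⟨Nx, hX⟩ := hX; obtain ⟨Ny, hY⟩ := hY
  funext n
  have hbox : ∀ (W : ℤ → A), (∀ i, Nx < i → W i = 0) → ∀ p : ℤ × ℕ, gbinom p.1 p.2 ≠ 0 →
      W p.1 ≠ 0 → (⇑d)^[p.2] (Y (n - p.1 + p.2)) ≠ 0 →
      p ∈ Finset.Icc (n - Ny) Nx ×ˢ Finset.range ((Nx + Ny - n + 1).toNat) := by
    rintro W hW ⟨i, k⟩ - h1 h2
    have hi : i ≤ Nx := by by_contra h; exact h1 (hW _ (by omega))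
    have hk : n - i + k ≤ Ny := by
      by_contra h; exact h2 (by rw [hY _ (by omega), dIter_zero])
    simp only [Finset.mem_product, Finset.mem_Icc, Finset.mem_range]
    omega
  rw [pdsMul_eq_sum d (c • X) Y n _ (hbox (c • X)
      (fun i hi => by simp [Pi.smul_apply, hX i hi])),
    Pi.smul_apply, pdsMul_eq_sum d X Y n _ (hbox X hX), Finset.smul_sum]
  refine Finset.sum_congr rfl fun p _ => ?_
  simp only [Pi.smul_apply, zsmul_eq_mul]
  ring

lemma pdsMul_zsmul_right {X Y : ℤ → A} (c : ℤ) (hX : PDSBdd X) (hY : PDSBdd Y) :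
    pdsMul ⇑d X (c • Y) = c • pdsMul ⇑d X Y := by
  obtain ⟨Nx, hX⟩ := hX; obtain ⟨Ny, hY⟩ := hY
  funext n
  have hbox : ∀ (W : ℤ → A), (∀ i, Ny < i → W i = 0) → ∀ p : ℤ × ℕ, gbinom p.1 p.2 ≠ 0 →
      X p.1 ≠ 0 → (⇑d)^[p.2] (W (n - p.1 + p.2)) ≠ 0 →
      p ∈ Finset.Icc (n - Ny) Nx ×ˢ Finset.range ((Nx + Ny - n + 1).toNat) := by
    rintro W hW ⟨i, k⟩ - h1 h2
    have hi : i ≤ Nx := by by_contra h; exact h1 (hX _ (by omega))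
    have hk : n - i + k ≤ Ny := by
      by_contra h; exact h2 (by rw [hW _ (by omega), dIter_zero])
    simp only [Finset.mem_product, Finset.mem_Icc, Finset.mem_range]
    omega
  rw [pdsMul_eq_sum d X (c • Y) n _ (hbox (c • Y)
      (fun i hi => by simp [Pi.smul_apply, hY i hi])),
    Pi.smul_apply, pdsMul_eq_sum d X Y n _ (hbox Y hY), Finset.smul_sum]
  refine Finset.sum_congr rfl fun p _ => ?_
  simp only [Pi.smul_apply, dIter_zsmul]
  simp only [zsmul_eq_mul]
  ring

lemma pdsPow_zsmul {X : ℤ → A} (c : ℤ) (hX : PDSBdd X) (j : ℕ) :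
    pdsPow ⇑d (c • X) j = (c ^ j) • pdsPow ⇑d X j := by
  induction j with
  | zero => simp [pdsPow]
  | succ j ih =>
    show pdsMul ⇑d (pdsPow ⇑d (c • X) j) (c • X) = _
    rw [ih, pdsMul_zsmul_left d _ (hX.pow d j) (hX.zsmul c),
      pdsMul_zsmul_right d _ (hX.pow d j) hX, smul_smul, ← pow_succ]
    rfl

lemma gbinom_identity1 (p m : ℤ) (a b : ℕ) :
    ∑ v ∈ Finset.range (b + 1), gbinom p (a + v) * gbinom m (b - v) * ((a + v).choose a : ℤ)
      = gbinom p a * gbinom (p + m - a) b := by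
  have hstep : ∀ v, gbinom p (a + v) * ((a + v).choose a : ℤ)
      = gbinom p a * gbinom (p - a) v := fun v => by
    rw [mul_comm, gbinom_trinom]
  calc ∑ v ∈ Finset.range (b + 1), gbinom p (a + v) * gbinom m (b - v) * ((a + v).choose a : ℤ)
      = ∑ v ∈ Finset.range (b + 1), gbinom p a * (gbinom (p - a) v * gbinom m (b - v)) := by
        refine Finset.sum_congr rfl fun v _ => ?_
        rw [mul_right_comm, hstep]; ring
    _ = gbinom p a * ∑ v ∈ Finset.range (b + 1), gbinom (p - a) v * gbinom m (b - v) := by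
        rw [Finset.mul_sum]
    _ = gbinom p a * gbinom (p + m - a) b := by
        rw [show p + m - a = (p - a) + m by ring, gbinom_add]

lemma dIter_mul_expand (q : ℕ) (c : ℤ) (x : A) (CK : ℕ) (hqK : q + 1 ≤ CK)
    {ι : Type*} (s : Finset ι) (co : ι → ℤ) (y z : ι → A) :
    c • (x * (⇑d)^[q] (∑ r ∈ s, co r • (y r * z r)))
    = ∑ r ∈ s, ∑ u ∈ Finset.range CK,
        c • (x * (co r • ((q.choose u : ℤ) • ((⇑d)^[u] (y r) * (⇑d)^[q - u] (z r))))) := by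
  rw [dIter_sum, Finset.mul_sum, Finset.smul_sum]
  refine Finset.sum_congr rfl fun r _ => ?_
  rw [dIter_zsmul, dIter_leibniz]
  rw [Finset.sum_subset (Finset.range_subset_range.mpr hqK) (fun u _ hu => by
      have : q < u := by simpa using hu
      simp [Nat.choose_eq_zero_of_lt this])]
  rw [Finset.smul_sum, Finset.mul_sum, Finset.smul_sum]

lemma pdsMul_assoc {X Y Z : ℤ → A} (hX : PDSBdd X) (hY : PDSBdd Y) (hZ : PDSBdd Z) :
    pdsMul ⇑d (pdsMul ⇑d X Y) Z = pdsMul ⇑d X (pdsMul ⇑d Y Z) := by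
  classical
  obtain ⟨Nx, hX⟩ := hX; obtain ⟨Ny, hY⟩ := hY; obtain ⟨Nz, hZ⟩ := hZ
  funext n
  set K : ℕ := (Nx + Ny + Nz - n + 1).toNat * 2 + 2 with hK
  have hval : ∀ (i : ℤ) (k : ℕ) (p : ℤ) (q : ℕ),
      gbinom i k • (gbinom p q • (X p * (⇑d)^[q] (Y (i - p + ↑q))) * (⇑d)^[k] (Z (n - i + ↑k)))
      = (gbinom p q * gbinom (p + (i - p + ↑q) - ↑q) k) •
          (X p * ((⇑d)^[q] (Y (i - p + ↑q)) *
            (⇑d)^[k] (Z (n - p - (i - p + ↑q) + ↑q + ↑k)))) := by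
    intro i k p q
    have e1 : p + (i - p + (q : ℤ)) - ↑q = i := by ring
    have e2 : n - p - (i - p + (q : ℤ)) + ↑q + ↑k = n - i + ↑k := by ring
    rw [e1, e2]
    simp only [zsmul_eq_mul]; push_cast; ring
  have hL : pdsMul ⇑d (pdsMul ⇑d X Y) Z n
      = ∑ w ∈ (Finset.Icc (n - Ny - Nz - K) Nx ×ˢ Finset.Icc (n - Nx - Nz - K) Ny)
            ×ˢ (Finset.range K ×ˢ Finset.range K),
          (gbinom w.1.1 w.2.1 * gbinom (w.1.1 + w.1.2 - w.2.1) w.2.2) •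
            (X w.1.1 * ((⇑d)^[w.2.1] (Y w.1.2) *
              (⇑d)^[w.2.2] (Z (n - w.1.1 - w.1.2 + w.2.1 + w.2.2)))) := by
    rw [pdsMul_eq_sum d (pdsMul ⇑d X Y) Z n
        (Finset.Icc (n - Nz) (Nx + Ny) ×ˢ Finset.range K) ?memI]
    case memI =>
      rintro ⟨i, k⟩ - hXY hZd
      have h1 : i ≤ Nx + Ny := by
        by_contra h; exact hXY (pdsMul_bdd d hX hY i (by omega))
      have h2 : n - i + k ≤ Nz := by
        by_contra h; exact hZd (by rw [hZ _ (by omega), dIter_zero])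
      simp only [Finset.mem_product, Finset.mem_Icc, Finset.mem_range]
      omega
    have hstepL : ∀ x ∈ Finset.Icc (n - Nz) (Nx + Ny) ×ˢ Finset.range K,
        gbinom (x : ℤ × ℕ).1 x.2 • ((pdsMul ⇑d X Y) x.1 * (⇑d)^[x.2] (Z (n - x.1 + ↑x.2)))
        = ∑ r ∈ Finset.Icc (n - Ny - Nz - K) Nx ×ˢ Finset.range K,
            gbinom x.1 x.2 • (gbinom r.1 r.2 • (X r.1 * (⇑d)^[r.2] (Y (x.1 - r.1 + ↑r.2)))
              * (⇑d)^[x.2] (Z (n - x.1 + ↑x.2))) := by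
      intro x hx
      simp only [Finset.mem_product, Finset.mem_Icc, Finset.mem_range] at hx
      rw [pdsMul_eq_sum d X Y x.1
          (Finset.Icc (n - Ny - Nz - K) Nx ×ˢ Finset.range K) ?_,
        Finset.sum_mul, Finset.smul_sum]
      rintro ⟨p, q⟩ - hXp hYd
      have h1 : p ≤ Nx := by by_contra h; exact hXp (hX _ (by omega))
      have h2 : x.1 - p + q ≤ Ny := by
        by_contra h; exact hYd (by rw [hY _ (by omega), dIter_zero])
      simp only [Finset.mem_product, Finset.mem_Icc, Finset.mem_range]
      omega
    rw [Finset.sum_congr rfl hstepL, ← Finset.sum_product']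
    refine Finset.sum_bij_ne_zero
      (fun x _ _ => ((x.2.1, x.1.1 - x.2.1 + ↑x.2.2), (x.2.2, x.1.2))) ?_ ?_ ?_ ?_
    · rintro ⟨⟨i, k⟩, ⟨p, q⟩⟩ h₁ h₂
      simp only [Finset.mem_product, Finset.mem_Icc, Finset.mem_range] at h₁
      have hXp : X p ≠ 0 := fun h => h₂ (by simp [h])
      have hYm : Y (i - p + ↑q) ≠ 0 := fun h => h₂ (by simp [h, dIter_zero])
      have hZl : Z (n - i + ↑k) ≠ 0 := fun h => h₂ (by simp [h, dIter_zero])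
      have b1 : p ≤ Nx := by by_contra h; exact hXp (hX _ (by omega))
      have b2 : i - p + ↑q ≤ Ny := by by_contra h; exact hYm (hY _ (by omega))
      have b3 : n - i + ↑k ≤ Nz := by by_contra h; exact hZl (hZ _ (by omega))
      simp only [Finset.mem_product, Finset.mem_Icc, Finset.mem_range]
      omega
    · rintro ⟨⟨i₁, k₁⟩, ⟨p₁, q₁⟩⟩ _h1 _h2 ⟨⟨i₂, k₂⟩, ⟨p₂, q₂⟩⟩ _h3 _h4 hEQ
      simp only [Prod.mk.injEq] at hEQ
      obtain ⟨⟨e1, e2⟩, e3, e4⟩ := hEQ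
      simp only [Prod.mk.injEq]
      refine ⟨⟨by omega, by omega⟩, by omega, by omega⟩
    · rintro ⟨⟨p, m⟩, ⟨a, b⟩⟩ hb hgb
      simp only [Finset.mem_product, Finset.mem_Icc, Finset.mem_range] at hb
      have hXp : X p ≠ 0 := fun h => hgb (by simp [h])
      have hYm : Y m ≠ 0 := fun h => hgb (by simp [h, dIter_zero])
      have hZl : Z (n - p - m + ↑a + ↑b) ≠ 0 := fun h => hgb (by simp [h, dIter_zero])
      have b1 : p ≤ Nx := by by_contra h; exact hXp (hX _ (by omega))
      have b2 : m ≤ Ny := by by_contra h; exact hYm (hY _ (by omega))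
      have b3 : n - p - m + ↑a + ↑b ≤ Nz := by by_contra h; exact hZl (hZ _ (by omega))
      have him : (p + m - (a : ℤ)) - p + ↑a = m := by ring
      have hv := hval (p + m - ↑a) b p a
      rw [him] at hv
      refine ⟨((p + m - ↑a, b), (p, a)), ?_, ?_, ?_⟩
      · simp only [Finset.mem_product, Finset.mem_Icc, Finset.mem_range]
        omega
      · dsimp only; rw [him, hv]; exact hgb
      · dsimp only; rw [him]
    · rintro ⟨⟨i, k⟩, ⟨p, q⟩⟩ - -
      exact hval i k p q
  have hval2 : ∀ (p : ℤ) (q : ℕ) (r : ℤ) (s u : ℕ), u ≤ q →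
      gbinom p q • (X p * (gbinom r s • ((q.choose u : ℤ) •
        ((⇑d)^[u] (Y r) * (⇑d)^[q - u] ((⇑d)^[s] (Z (n - p + ↑q - r + ↑s)))))))
      = (gbinom p (u + (q - u)) * gbinom r ((q - u) + s - (q - u))
          * ((u + (q - u)).choose u : ℤ)) •
          (X p * ((⇑d)^[u] (Y r) *
            (⇑d)^[(q - u) + s] (Z (n - p - r + ↑u + ↑((q - u) + s))))) := by
    intro p q r s u hu
    have e1 : u + (q - u) = q := by omega
    have e2 : (q - u) + s - (q - u) = s := by omega
    have e3 : (n - p - r + (u : ℤ) + ↑((q - u) + s)) = n - p + ↑q - r + ↑s := by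
      push_cast; omega
    rw [e1, e2, e3, ← Function.iterate_add_apply]
    simp only [zsmul_eq_mul]; push_cast; ring
  have hR : pdsMul ⇑d X (pdsMul ⇑d Y Z) n
      = ∑ w ∈ (Finset.Icc (n - Ny - Nz - K) Nx ×ˢ Finset.Icc (n - Nx - Nz - K) Ny)
            ×ˢ (Finset.range K ×ˢ Finset.range K),
          (gbinom w.1.1 w.2.1 * gbinom (w.1.1 + w.1.2 - w.2.1) w.2.2) •
            (X w.1.1 * ((⇑d)^[w.2.1] (Y w.1.2) *
              (⇑d)^[w.2.2] (Z (n - w.1.1 - w.1.2 + w.2.1 + w.2.2)))) := by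
    rw [pdsMul_eq_sum d X (pdsMul ⇑d Y Z) n
        (Finset.Icc (n - Ny - Nz - K) Nx ×ˢ Finset.range K) ?memP']
    case memP' =>
      rintro ⟨p, q⟩ - hXp hYZd
      have h1 : p ≤ Nx := by by_contra h; exact hXp (hX _ (by omega))
      have h2 : n - p + q ≤ Ny + Nz := by
        by_contra h
        exact hYZd (by rw [pdsMul_bdd d hY hZ _ (by omega), dIter_zero])
      simp only [Finset.mem_product, Finset.mem_Icc, Finset.mem_range]
      omega
    have hstepR : ∀ x ∈ Finset.Icc (n - Ny - Nz - K) Nx ×ˢ Finset.range K,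
        gbinom (x : ℤ × ℕ).1 x.2 • (X x.1 * (⇑d)^[x.2] ((pdsMul ⇑d Y Z) (n - x.1 + ↑x.2)))
        = ∑ r ∈ Finset.Icc (n - Nx - Nz - K) Ny ×ˢ Finset.range K, ∑ u ∈ Finset.range K,
            gbinom x.1 x.2 • (X x.1 * (gbinom r.1 r.2 • ((x.2.choose u : ℤ) •
              ((⇑d)^[u] (Y r.1) *
                (⇑d)^[x.2 - u] ((⇑d)^[r.2] (Z (n - x.1 + ↑x.2 - r.1 + ↑r.2))))))) := by
      intro x hx
      simp only [Finset.mem_product, Finset.mem_Icc, Finset.mem_range] at hx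
      rw [pdsMul_eq_sum d Y Z (n - x.1 + ↑x.2)
          (Finset.Icc (n - Nx - Nz - K) Ny ×ˢ Finset.range K) ?_]
      · exact dIter_mul_expand d x.2 _ _ K (by omega) _ _ _ _
      · rintro ⟨r, s⟩ - hYr hZd
        have h1 : r ≤ Ny := by by_contra h; exact hYr (hY _ (by omega))
        have h2 : n - x.1 + x.2 - r + s ≤ Nz := by
          by_contra h; exact hZd (by rw [hZ _ (by omega), dIter_zero])
        simp only [Finset.mem_product, Finset.mem_Icc, Finset.mem_range]
        omega
    rw [Finset.sum_congr rfl hstepR, ← Finset.sum_product', ← Finset.sum_product']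
    have hsig : ∑ σ ∈ ((Finset.Icc (n - Ny - Nz - K) Nx ×ˢ Finset.Icc (n - Nx - Nz - K) Ny)
            ×ˢ (Finset.range K ×ˢ Finset.range K)).sigma (fun w => Finset.range (w.2.2 + 1)),
          (gbinom σ.1.1.1 (σ.1.2.1 + σ.2) * gbinom σ.1.1.2 (σ.1.2.2 - σ.2)
            * ((σ.1.2.1 + σ.2).choose σ.1.2.1 : ℤ)) •
            (X σ.1.1.1 * ((⇑d)^[σ.1.2.1] (Y σ.1.1.2) *
              (⇑d)^[σ.1.2.2] (Z (n - σ.1.1.1 - σ.1.1.2 + σ.1.2.1 + σ.1.2.2))))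
        = ∑ w ∈ (Finset.Icc (n - Ny - Nz - K) Nx ×ˢ Finset.Icc (n - Nx - Nz - K) Ny)
            ×ˢ (Finset.range K ×ˢ Finset.range K),
          (gbinom w.1.1 w.2.1 * gbinom (w.1.1 + w.1.2 - w.2.1) w.2.2) •
            (X w.1.1 * ((⇑d)^[w.2.1] (Y w.1.2) *
              (⇑d)^[w.2.2] (Z (n - w.1.1 - w.1.2 + w.2.1 + w.2.2)))) := by
      rw [Finset.sum_sigma]
      refine Finset.sum_congr rfl fun w _ => ?_
      dsimp only
      rw [← Finset.sum_smul, gbinom_identity1]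
    rw [← hsig]
    refine Finset.sum_bij_ne_zero
      (fun w _ _ => ⟨((w.1.1.1, w.1.2.1), (w.2, (w.1.1.2 - w.2) + w.1.2.2)), w.1.1.2 - w.2⟩)
      ?_ ?_ ?_ ?_
    · rintro ⟨⟨⟨p, q⟩, ⟨r, s⟩⟩, u⟩ h₁ h₂
      dsimp only at h₂
      simp only [Finset.mem_product, Finset.mem_Icc, Finset.mem_range] at h₁
      have hcu : (q.choose u : ℤ) ≠ 0 := fun h => h₂ (by simp [h])
      have hu : u ≤ q := by
        by_contra h
        exact hcu (by rw [Nat.choose_eq_zero_of_lt (by omega)]; simp)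
      have hXp : X p ≠ 0 := fun h => h₂ (by simp [h])
      have hYr : Y r ≠ 0 := fun h => h₂ (by simp [h, dIter_zero])
      have hZw : Z (n - p + ↑q - r + ↑s) ≠ 0 := fun h => h₂ (by simp [h, dIter_zero])
      have b1 : p ≤ Nx := by by_contra h; exact hXp (hX _ (by omega))
      have b2 : r ≤ Ny := by by_contra h; exact hYr (hY _ (by omega))
      have b3 : n - p + ↑q - r + ↑s ≤ Nz := by by_contra h; exact hZw (hZ _ (by omega))
      simp only [Finset.mem_sigma, Finset.mem_product, Finset.mem_Icc, Finset.mem_range]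
      omega
    · rintro ⟨⟨⟨p₁, q₁⟩, ⟨r₁, s₁⟩⟩, u₁⟩ _m1 hne₁ ⟨⟨⟨p₂, q₂⟩, ⟨r₂, s₂⟩⟩, u₂⟩ _m2 hne₂ hEQ
      dsimp only at hne₁ hne₂
      have hu₁ : u₁ ≤ q₁ := by
        by_contra h
        exact hne₁ (by rw [Nat.choose_eq_zero_of_lt (by omega)]; simp)
      have hu₂ : u₂ ≤ q₂ := by
        by_contra h
        exact hne₂ (by rw [Nat.choose_eq_zero_of_lt (by omega)]; simp)
      have E1 := congrArg (fun σ : (_ : (ℤ × ℤ) × ℕ × ℕ) × ℕ => σ.1.1.1) hEQ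
      have E2 := congrArg (fun σ : (_ : (ℤ × ℤ) × ℕ × ℕ) × ℕ => σ.1.1.2) hEQ
      have E3 := congrArg (fun σ : (_ : (ℤ × ℤ) × ℕ × ℕ) × ℕ => σ.1.2.1) hEQ
      have E4 := congrArg (fun σ : (_ : (ℤ × ℤ) × ℕ × ℕ) × ℕ => σ.1.2.2) hEQ
      have E5 := congrArg (fun σ : (_ : (ℤ × ℤ) × ℕ × ℕ) × ℕ => σ.2) hEQ
      dsimp only at E1 E2 E3 E4 E5
      simp only [Prod.mk.injEq]
      refine ⟨⟨⟨by omega, by omega⟩, by omega, by omega⟩, by omega⟩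
    · rintro ⟨⟨⟨p, m⟩, ⟨a, b⟩⟩, v⟩ hb hgb
      dsimp only at hgb
      simp only [Finset.mem_sigma, Finset.mem_product, Finset.mem_Icc, Finset.mem_range] at hb
      have hXp : X p ≠ 0 := fun h => hgb (by simp [h])
      have hYm : Y m ≠ 0 := fun h => hgb (by simp [h, dIter_zero])
      have hZl : Z (n - p - m + ↑a + ↑b) ≠ 0 := fun h => hgb (by simp [h, dIter_zero])
      have b1 : p ≤ Nx := by by_contra h; exact hXp (hX _ (by omega))
      have b2 : m ≤ Ny := by by_contra h; exact hYm (hY _ (by omega))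
      have b3 : n - p - m + ↑a + ↑b ≤ Nz := by by_contra h; exact hZl (hZ _ (by omega))
      have e4 : (a + v) - a = v := by omega
      have e5 : v + (b - v) = b := by omega
      have hv := hval2 p (a + v) m (b - v) a (by omega)
      rw [e4, e5] at hv
      refine ⟨(((p, a + v), (m, b - v)), a), ?_, ?_, ?_⟩
      · simp only [Finset.mem_product, Finset.mem_Icc, Finset.mem_range]
        omega
      · dsimp only; rw [e4, hv]; exact hgb
      · dsimp only; rw [e4, e5]
    · rintro ⟨⟨⟨p, q⟩, ⟨r, s⟩⟩, u⟩ - hne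
      dsimp only at hne
      have hu : u ≤ q := by
        by_contra h
        exact hne (by rw [Nat.choose_eq_zero_of_lt (by omega)]; simp)
      exact hval2 p q r s u hu
  rw [hL, hR]

lemma gbinom_identity2 (n i : ℤ) (α β : ℕ) :
    ∑ v ∈ Finset.range (β + 1),
      sgn (n + ↑α + ↑v) * gbinom (n + ↑α + ↑v) (α + v) * ((α + v).choose α : ℤ)
        * gbinom i (β - v)
    = sgn (n + ↑α + ↑β) * gbinom (n + ↑α) α * gbinom (n - i + ↑α + ↑β) β := by
  have h1 : ∀ v ∈ Finset.range (β + 1),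
      sgn (n + ↑α + ↑v) * gbinom (n + ↑α + ↑v) (α + v) * ((α + v).choose α : ℤ)
        * gbinom i (β - v)
      = (sgn (n + ↑α) * gbinom (n + ↑α) α)
          * (gbinom (-(n + ↑α + 1)) v * gbinom i (β - v)) := by
    intro v _
    have hc : ((α + v).choose α : ℤ) = ((α + v).choose v : ℤ) := by
      have h := Nat.choose_symm (Nat.le_add_right α v)
      simp only [Nat.add_sub_cancel_left] at h
      exact_mod_cast h.symm
    have ht : ((v + α).choose v : ℤ) * gbinom (n + ↑α + ↑v) (v + α)
        = gbinom (n + ↑α + ↑v) v * gbinom (n + ↑α) α := by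
      have := gbinom_trinom (n + ↑α + ↑v) v α
      rwa [show (n + ↑α + ↑v - ↑v) = n + ↑α by ring] at this
    rw [Nat.add_comm v α] at ht
    have hneg : gbinom (-(n + ↑α + 1)) v = (-1) ^ v * gbinom (n + ↑α + ↑v) v := by
      rw [gbinom_neg]
      congr 2
      push_cast; ring
    have hs : sgn (n + ↑α + ↑v) = sgn (n + ↑α) * (-1) ^ v := by
      rw [show n + (α : ℤ) + ↑v = (n + ↑α) + ↑v by ring, sgn_add, sgn_natCast]
    rw [hs, hc, hneg]
    linear_combination (sgn (n + (α : ℤ)) * (-1) ^ v * gbinom i (β - v)) * ht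
  rw [Finset.sum_congr rfl h1, ← Finset.mul_sum, ← gbinom_add]
  have h2 : gbinom (-(n + ↑α + 1) + i) β = (-1) ^ β * gbinom (n - i + ↑α + ↑β) β := by
    rw [show -(n + (α : ℤ) + 1) + i = -(n - i + ↑α + 1) by ring, gbinom_neg]
    congr 2
    push_cast; ring
  rw [h2, sgn_add (n + ↑α) (β : ℤ), sgn_natCast]
  ring

lemma gbinom_identity3 (n i : ℤ) (α β : ℕ) :
    ∑ v ∈ Finset.range (α + 1),
      gbinom (n - i + ↑α) (α - v) * (sgn (n - i + ↑α + ↑β) * gbinom (n - i + ↑α + ↑β) β)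
        * (sgn i * gbinom i v)
    = sgn (n + ↑α + ↑β) * gbinom (n + ↑α) α * gbinom (n - i + ↑α + ↑β) β := by
  have h1 : ∀ v ∈ Finset.range (α + 1),
      gbinom (n - i + ↑α) (α - v) * (sgn (n - i + ↑α + ↑β) * gbinom (n - i + ↑α + ↑β) β)
        * (sgn i * gbinom i v)
      = (sgn (n - i + ↑α + ↑β) * sgn i * gbinom (n - i + ↑α + ↑β) β)
          * (gbinom i v * gbinom (n - i + ↑α) (α - v)) := by
    intro v _; ring
  rw [Finset.sum_congr rfl h1, ← Finset.mul_sum, ← gbinom_add]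
  have h2 : sgn (n - i + ↑α + ↑β) * sgn i = sgn (n + ↑α + ↑β) := by
    rw [← sgn_add]; congr 1; ring
  have h3 : gbinom (i + (n - i + ↑α)) α = gbinom (n + ↑α) α := by
    congr 1; ring
  rw [h2, h3]; ring

lemma dIter_expand2 (q : ℕ) (c e : ℤ) (CK : ℕ) (hqK : q + 1 ≤ CK)
    {ι : Type*} (s : Finset ι) (co : ι → ℤ) (y z : ι → A) :
    c • (e • (⇑d)^[q] (∑ r ∈ s, co r • (y r * z r)))
    = ∑ r ∈ s, ∑ u ∈ Finset.range CK,
        c • (e • (co r • ((q.choose u : ℤ) • ((⇑d)^[u] (y r) * (⇑d)^[q - u] (z r))))) := by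
  rw [dIter_sum, Finset.smul_sum, Finset.smul_sum]
  refine Finset.sum_congr rfl fun r _ => ?_
  rw [dIter_zsmul, dIter_leibniz]
  rw [Finset.sum_subset (Finset.range_subset_range.mpr hqK) (fun u _ hu => by
      have : q < u := by simpa using hu
      simp [Nat.choose_eq_zero_of_lt this])]
  rw [Finset.smul_sum, Finset.smul_sum, Finset.smul_sum]

lemma dIter_zsmul₂ (q : ℕ) (c e : ℤ) (w : A) :
    (⇑d)^[q] (c • (e • w)) = c • (e • (⇑d)^[q] w) := by
  rw [dIter_zsmul, dIter_zsmul]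

lemma pdsConj_mul {X Y : ℤ → A} (hX : PDSBdd X) (hY : PDSBdd Y) :
    pdsConj ⇑d (pdsMul ⇑d X Y) = pdsMul ⇑d (pdsConj ⇑d Y) (pdsConj ⇑d X) := by
  classical
  obtain ⟨Nx, hX⟩ := hX; obtain ⟨Ny, hY⟩ := hY
  funext n
  set K : ℕ := (Nx + Ny - n + 1).toNat * 2 + 2 with hK
  have hL : pdsConj ⇑d (pdsMul ⇑d X Y) n
      = ∑ w ∈ Finset.Icc (n - Ny) Nx ×ˢ (Finset.range K ×ˢ Finset.range K),
          (sgn (n + ↑w.2.1 + ↑w.2.2) * gbinom (n + ↑w.2.1) w.2.1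
            * gbinom (n - w.1 + ↑w.2.1 + ↑w.2.2) w.2.2) •
            ((⇑d)^[w.2.1] (X w.1) * (⇑d)^[w.2.2] (Y (n - w.1 + ↑w.2.1 + ↑w.2.2))) := by
    rw [pdsConj_eq_sum d (pdsMul ⇑d X Y) n (Finset.range K) ?memK]
    case memK =>
      rintro k - hd
      have h1 : n + k ≤ Nx + Ny := by
        by_contra h
        exact hd (by rw [pdsMul_bdd d hX hY _ (by omega), dIter_zero])
      simp only [Finset.mem_range]
      omega
    have hstepL : ∀ k ∈ Finset.range K,
        sgn (n + ↑k) • (gbinom (n + ↑k) k • (⇑d)^[k] (pdsMul ⇑d X Y (n + ↑k)))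
        = ∑ r ∈ Finset.Icc (n - Ny) Nx ×ˢ Finset.range K, ∑ u ∈ Finset.range K,
            sgn (n + ↑k) • (gbinom (n + ↑k) k • (gbinom r.1 r.2 • ((k.choose u : ℤ) •
              ((⇑d)^[u] (X r.1) *
                (⇑d)^[k - u] ((⇑d)^[r.2] (Y (n + ↑k - r.1 + ↑r.2))))))) := by
      intro k hk
      simp only [Finset.mem_range] at hk
      rw [pdsMul_eq_sum d X Y (n + ↑k) (Finset.Icc (n - Ny) Nx ×ˢ Finset.range K) ?_]
      · exact dIter_expand2 d k _ _ K (by omega) _ _ _ _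
      · rintro ⟨i, s⟩ - hXi hYd
        have h1 : i ≤ Nx := by by_contra h; exact hXi (hX _ (by omega))
        have h2 : n + k - i + s ≤ Ny := by
          by_contra h; exact hYd (by rw [hY _ (by omega), dIter_zero])
        simp only [Finset.mem_product, Finset.mem_Icc, Finset.mem_range]
        omega
    rw [Finset.sum_congr rfl hstepL, ← Finset.sum_product', ← Finset.sum_product']
    have hvalL : ∀ (k : ℕ) (i : ℤ) (s u : ℕ), u ≤ k →
        sgn (n + ↑k) • (gbinom (n + ↑k) k • (gbinom i s • ((k.choose u : ℤ) •
          ((⇑d)^[u] (X i) * (⇑d)^[k - u] ((⇑d)^[s] (Y (n + ↑k - i + ↑s)))))))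
        = (sgn (n + ↑u + ↑(k - u)) * gbinom (n + ↑u + ↑(k - u)) (u + (k - u))
            * ((u + (k - u)).choose u : ℤ) * gbinom i ((k - u) + s - (k - u))) •
            ((⇑d)^[u] (X i) *
              (⇑d)^[(k - u) + s] (Y (n - i + ↑u + ↑((k - u) + s)))) := by
      intro k i s u hu
      have e1 : u + (k - u) = k := by omega
      have e2 : (k - u) + s - (k - u) = s := by omega
      have e3 : (n + (u : ℤ) + ↑(k - u)) = n + ↑k := by push_cast; omega
      have e4 : (n - i + (u : ℤ) + ↑((k - u) + s)) = n + ↑k - i + ↑s := by push_cast; omega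
      rw [e1, e2, e3, e4, ← Function.iterate_add_apply]
      simp only [zsmul_eq_mul]; push_cast; ring
    have hsigL : ∑ σ ∈ (Finset.Icc (n - Ny) Nx ×ˢ (Finset.range K ×ˢ Finset.range K)).sigma
            (fun w => Finset.range (w.2.2 + 1)),
          (sgn (n + ↑σ.1.2.1 + ↑σ.2) * gbinom (n + ↑σ.1.2.1 + ↑σ.2) (σ.1.2.1 + σ.2)
            * ((σ.1.2.1 + σ.2).choose σ.1.2.1 : ℤ) * gbinom σ.1.1 (σ.1.2.2 - σ.2)) •
            ((⇑d)^[σ.1.2.1] (X σ.1.1) *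
              (⇑d)^[σ.1.2.2] (Y (n - σ.1.1 + ↑σ.1.2.1 + ↑σ.1.2.2)))
        = ∑ w ∈ Finset.Icc (n - Ny) Nx ×ˢ (Finset.range K ×ˢ Finset.range K),
          (sgn (n + ↑w.2.1 + ↑w.2.2) * gbinom (n + ↑w.2.1) w.2.1
            * gbinom (n - w.1 + ↑w.2.1 + ↑w.2.2) w.2.2) •
            ((⇑d)^[w.2.1] (X w.1) * (⇑d)^[w.2.2] (Y (n - w.1 + ↑w.2.1 + ↑w.2.2))) := by
      rw [Finset.sum_sigma]
      refine Finset.sum_congr rfl fun w _ => ?_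
      dsimp only
      rw [← Finset.sum_smul, gbinom_identity2]
    rw [← hsigL]
    refine Finset.sum_bij_ne_zero
      (fun x _ _ => ⟨(x.1.2.1, (x.2, (x.1.1 - x.2) + x.1.2.2)), x.1.1 - x.2⟩) ?_ ?_ ?_ ?_
    · rintro ⟨⟨k, ⟨i, s⟩⟩, u⟩ h₁ h₂
      dsimp only at h₂ ⊢
      simp only [Finset.mem_product, Finset.mem_Icc, Finset.mem_range] at h₁
      have hcu : (k.choose u : ℤ) ≠ 0 := fun h => h₂ (by simp [h])
      have hu : u ≤ k := by
        by_contra h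
        exact hcu (by rw [Nat.choose_eq_zero_of_lt (by omega)]; simp)
      have hXi : X i ≠ 0 := fun h => h₂ (by simp [h, dIter_zero])
      have hYw : Y (n + ↑k - i + ↑s) ≠ 0 := fun h => h₂ (by simp [h, dIter_zero])
      have b1 : i ≤ Nx := by by_contra h; exact hXi (hX _ (by omega))
      have b2 : n + ↑k - i + ↑s ≤ Ny := by by_contra h; exact hYw (hY _ (by omega))
      simp only [Finset.mem_sigma, Finset.mem_product, Finset.mem_Icc, Finset.mem_range]
      omega
    · rintro ⟨⟨k₁, ⟨i₁, s₁⟩⟩, u₁⟩ _m1 hne₁ ⟨⟨k₂, ⟨i₂, s₂⟩⟩, u₂⟩ _m2 hne₂ hEQ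
      dsimp only at hne₁ hne₂
      have hu₁ : u₁ ≤ k₁ := by
        by_contra h
        exact hne₁ (by rw [Nat.choose_eq_zero_of_lt (by omega)]; simp)
      have hu₂ : u₂ ≤ k₂ := by
        by_contra h
        exact hne₂ (by rw [Nat.choose_eq_zero_of_lt (by omega)]; simp)
      have E1 := congrArg (fun σ : (_ : ℤ × ℕ × ℕ) × ℕ => σ.1.1) hEQ
      have E2 := congrArg (fun σ : (_ : ℤ × ℕ × ℕ) × ℕ => σ.1.2.1) hEQ
      have E3 := congrArg (fun σ : (_ : ℤ × ℕ × ℕ) × ℕ => σ.1.2.2) hEQ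
      have E4 := congrArg (fun σ : (_ : ℤ × ℕ × ℕ) × ℕ => σ.2) hEQ
      dsimp only at E1 E2 E3 E4
      simp only [Prod.mk.injEq]
      exact ⟨⟨by omega, by omega, by omega⟩, by omega⟩
    · rintro ⟨⟨i, α, β⟩, v⟩ hb hgb
      dsimp only at hgb
      simp only [Finset.mem_sigma, Finset.mem_product, Finset.mem_Icc, Finset.mem_range] at hb
      have hXi : X i ≠ 0 := fun h => hgb (by simp [h, dIter_zero])
      have hYm : Y (n - i + ↑α + ↑β) ≠ 0 := fun h => hgb (by simp [h, dIter_zero])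
      have b1 : i ≤ Nx := by by_contra h; exact hXi (hX _ (by omega))
      have b2 : n - i + ↑α + ↑β ≤ Ny := by by_contra h; exact hYm (hY _ (by omega))
      have e4 : (α + v) - α = v := by omega
      have e5 : v + (β - v) = β := by omega
      have hv := hvalL (α + v) i (β - v) α (by omega)
      rw [e4, e5] at hv
      refine ⟨((α + v, (i, β - v)), α), ?_, ?_, ?_⟩
      · simp only [Finset.mem_product, Finset.mem_Icc, Finset.mem_range]
        omega
      · dsimp only; rw [e4, hv]; exact hgb
      · dsimp only; rw [e4, e5]
    · rintro ⟨⟨k, ⟨i, s⟩⟩, u⟩ - hne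
      dsimp only at hne ⊢
      have hu : u ≤ k := by
        by_contra h
        exact hne (by rw [Nat.choose_eq_zero_of_lt (by omega)]; simp)
      exact hvalL k i s u hu
  have hR : pdsMul ⇑d (pdsConj ⇑d Y) (pdsConj ⇑d X) n
      = ∑ w ∈ Finset.Icc (n - Ny) Nx ×ˢ (Finset.range K ×ˢ Finset.range K),
          (sgn (n + ↑w.2.1 + ↑w.2.2) * gbinom (n + ↑w.2.1) w.2.1
            * gbinom (n - w.1 + ↑w.2.1 + ↑w.2.2) w.2.2) •
            ((⇑d)^[w.2.1] (X w.1) * (⇑d)^[w.2.2] (Y (n - w.1 + ↑w.2.1 + ↑w.2.2))) := by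
    rw [pdsMul_eq_sum d (pdsConj ⇑d Y) (pdsConj ⇑d X) n
        (Finset.Icc (n - Nx) Ny ×ˢ Finset.range K) ?memPc]
    case memPc =>
      rintro ⟨p, q⟩ - hcY hcXd
      have h1 : p ≤ Ny := by
        by_contra h; exact hcY (pdsConj_bdd d hY p (by omega))
      have h2 : n - p + q ≤ Nx := by
        by_contra h
        exact hcXd (by rw [pdsConj_bdd d hX _ (by omega), dIter_zero])
      simp only [Finset.mem_product, Finset.mem_Icc, Finset.mem_range]
      omega
    have hstepR : ∀ x ∈ Finset.Icc (n - Nx) Ny ×ˢ Finset.range K,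
        gbinom (x : ℤ × ℕ).1 x.2 •
          (pdsConj ⇑d Y x.1 * (⇑d)^[x.2] (pdsConj ⇑d X (n - x.1 + ↑x.2)))
        = ∑ a ∈ Finset.range K, ∑ b ∈ Finset.range K,
            gbinom x.1 x.2 • ((sgn (x.1 + ↑a) • (gbinom (x.1 + ↑a) a • (⇑d)^[a] (Y (x.1 + ↑a))))
              * (sgn (n - x.1 + ↑x.2 + ↑b) • (gbinom (n - x.1 + ↑x.2 + ↑b) b •
                  (⇑d)^[x.2] ((⇑d)^[b] (X (n - x.1 + ↑x.2 + ↑b)))))) := by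
      intro x hx
      simp only [Finset.mem_product, Finset.mem_Icc, Finset.mem_range] at hx
      rw [pdsConj_eq_sum d Y x.1 (Finset.range K) ?_,
        pdsConj_eq_sum d X (n - x.1 + ↑x.2) (Finset.range K) ?_]
      · rw [dIter_sum]
        simp only [dIter_zsmul₂]
        rw [Finset.sum_mul_sum]
        simp only [Finset.smul_sum]
      · rintro b - hXd
        have h1 : n - x.1 + x.2 + b ≤ Nx := by
          by_contra h; exact hXd (by rw [hX _ (by omega), dIter_zero])
        simp only [Finset.mem_range]
        omega
      · rintro a - hYd
        have h1 : x.1 + a ≤ Ny := by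
          by_contra h; exact hYd (by rw [hY _ (by omega), dIter_zero])
        simp only [Finset.mem_range]
        omega
    rw [Finset.sum_congr rfl hstepR, ← Finset.sum_product', ← Finset.sum_product']
    have hvalR : ∀ (p : ℤ) (q a b : ℕ),
        gbinom p q • ((sgn (p + ↑a) • (gbinom (p + ↑a) a • (⇑d)^[a] (Y (p + ↑a))))
          * (sgn (n - p + ↑q + ↑b) • (gbinom (n - p + ↑q + ↑b) b •
              (⇑d)^[q] ((⇑d)^[b] (X (n - p + ↑q + ↑b))))))
        = (gbinom (n - (n - p + ↑q + ↑b) + ↑(q + b)) ((q + b) - b)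
            * (sgn (n - (n - p + ↑q + ↑b) + ↑(q + b) + ↑a)
              * gbinom (n - (n - p + ↑q + ↑b) + ↑(q + b) + ↑a) a)
            * (sgn (n - p + ↑q + ↑b) * gbinom (n - p + ↑q + ↑b) b)) •
            ((⇑d)^[a] (Y (n - (n - p + ↑q + ↑b) + ↑(q + b) + ↑a)) *
              (⇑d)^[q + b] (X (n - p + ↑q + ↑b))) := by
      intro p q a b
      have e1 : (q + b) - b = q := by omega
      have e2 : n - (n - p + (q : ℤ) + ↑b) + ↑(q + b) = p := by push_cast; ring
      have e3 : n - (n - p + (q : ℤ) + ↑b) + ↑(q + b) + ↑a = p + ↑a := by push_cast; ring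
      rw [e1, e3, e2, Function.iterate_add_apply]
      simp only [zsmul_eq_mul]; push_cast; ring
    have hsigR : ∑ σ ∈ (Finset.Icc (n - Ny) Nx ×ˢ (Finset.range K ×ˢ Finset.range K)).sigma
            (fun w => Finset.range (w.2.1 + 1)),
          (gbinom (n - σ.1.1 + ↑σ.1.2.1) (σ.1.2.1 - σ.2)
            * (sgn (n - σ.1.1 + ↑σ.1.2.1 + ↑σ.1.2.2)
              * gbinom (n - σ.1.1 + ↑σ.1.2.1 + ↑σ.1.2.2) σ.1.2.2)
            * (sgn σ.1.1 * gbinom σ.1.1 σ.2)) •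
            ((⇑d)^[σ.1.2.2] (Y (n - σ.1.1 + ↑σ.1.2.1 + ↑σ.1.2.2)) * (⇑d)^[σ.1.2.1] (X σ.1.1))
        = ∑ w ∈ Finset.Icc (n - Ny) Nx ×ˢ (Finset.range K ×ˢ Finset.range K),
          (sgn (n + ↑w.2.1 + ↑w.2.2) * gbinom (n + ↑w.2.1) w.2.1
            * gbinom (n - w.1 + ↑w.2.1 + ↑w.2.2) w.2.2) •
            ((⇑d)^[w.2.1] (X w.1) * (⇑d)^[w.2.2] (Y (n - w.1 + ↑w.2.1 + ↑w.2.2))) := by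
      rw [Finset.sum_sigma]
      refine Finset.sum_congr rfl fun w _ => ?_
      dsimp only
      rw [← Finset.sum_smul, gbinom_identity3]
      simp only [zsmul_eq_mul]; ring
    rw [← hsigR]
    refine Finset.sum_bij_ne_zero
      (fun x _ _ => ⟨(n - x.1.1.1 + ↑x.1.1.2 + ↑x.2, (x.1.1.2 + x.2, x.1.2)), x.2⟩) ?_ ?_ ?_ ?_
    · rintro ⟨⟨⟨p, q⟩, a⟩, b⟩ h₁ h₂
      dsimp only at h₂ ⊢
      simp only [Finset.mem_product, Finset.mem_Icc, Finset.mem_range] at h₁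
      have hY1 : Y (p + ↑a) ≠ 0 := fun h => h₂ (by simp [h, dIter_zero])
      have hX1 : X (n - p + ↑q + ↑b) ≠ 0 := fun h => h₂ (by simp [h, dIter_zero])
      have b1 : p + ↑a ≤ Ny := by by_contra h; exact hY1 (hY _ (by omega))
      have b2 : n - p + ↑q + ↑b ≤ Nx := by by_contra h; exact hX1 (hX _ (by omega))
      simp only [Finset.mem_sigma, Finset.mem_product, Finset.mem_Icc, Finset.mem_range]
      omega
    · rintro ⟨⟨⟨p₁, q₁⟩, a₁⟩, b₁⟩ _m1 _hne₁ ⟨⟨⟨p₂, q₂⟩, a₂⟩, b₂⟩ _m2 _hne₂ hEQ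
      have E1 := congrArg (fun σ : (_ : ℤ × ℕ × ℕ) × ℕ => σ.1.1) hEQ
      have E2 := congrArg (fun σ : (_ : ℤ × ℕ × ℕ) × ℕ => σ.1.2.1) hEQ
      have E3 := congrArg (fun σ : (_ : ℤ × ℕ × ℕ) × ℕ => σ.1.2.2) hEQ
      have E4 := congrArg (fun σ : (_ : ℤ × ℕ × ℕ) × ℕ => σ.2) hEQ
      dsimp only at E1 E2 E3 E4
      simp only [Prod.mk.injEq]
      exact ⟨⟨⟨by omega, by omega⟩, by omega⟩, by omega⟩
    · rintro ⟨⟨i, α, β⟩, v⟩ hb hgb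
      dsimp only at hgb
      simp only [Finset.mem_sigma, Finset.mem_product, Finset.mem_Icc, Finset.mem_range] at hb
      have hYm : Y (n - i + ↑α + ↑β) ≠ 0 := fun h => hgb (by simp [h, dIter_zero])
      have hXi : X i ≠ 0 := fun h => hgb (by simp [h, dIter_zero])
      have b1 : n - i + ↑α + ↑β ≤ Ny := by by_contra h; exact hYm (hY _ (by omega))
      have b2 : i ≤ Nx := by by_contra h; exact hXi (hX _ (by omega))
      have E1 : (α - v) + v = α := by omega
      have E2 : n - (n - i + (α : ℤ)) + ↑(α - v) + ↑v = i := by omega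
      have hv := hvalR (n - i + ↑α) (α - v) β v
      rw [E2, E1] at hv
      refine ⟨(((n - i + ↑α, α - v), β), v), ?_, ?_, ?_⟩
      · simp only [Finset.mem_product, Finset.mem_Icc, Finset.mem_range]
        omega
      · dsimp only; rw [E2, hv]; exact hgb
      · dsimp only; rw [E2, E1]
    · rintro ⟨⟨⟨p, q⟩, a⟩, b⟩ - -
      exact hvalR p q a b
  rw [hL, hR]

lemma pdsRes_conj (X : ℤ → A) : pdsRes (pdsConj ⇑d X) = - pdsRes X := by
  unfold pdsRes
  rw [pdsConj_eq_sum d X (-1) {0} ?_]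
  · rw [Finset.sum_singleton]
    norm_num [sgn_neg_one, gbinom_zero_right]
  · intro k hg _
    simp only [Finset.mem_singleton]
    by_contra hk
    refine hg ?_
    rw [show (-1 + (k : ℤ)) = ((k - 1 : ℕ) : ℤ) by omega, gbinom_natCast]
    simp [Nat.choose_eq_zero_of_lt (show k - 1 < k by omega)]

lemma res_mul_comm {X Y : ℤ → A} (hX : PDSBdd X) (hY : PDSBdd Y) :
    pdsRes (pdsMul ⇑d X Y) - pdsRes (pdsMul ⇑d Y X) ∈ Set.range ⇑d := by
  classical
  obtain ⟨Nx, hX⟩ := hX; obtain ⟨Ny, hY⟩ := hY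
  set K : ℕ := (Nx + Ny + 2).toNat + 2 with hK
  unfold pdsRes
  rw [pdsMul_eq_sum d X Y (-1) (Finset.Icc (-1 - Ny) Nx ×ˢ Finset.range K) ?m1,
    pdsMul_eq_sum d Y X (-1) (Finset.Icc (-1 - Nx) Ny ×ˢ Finset.range K) ?m2]
  case m1 =>
    rintro ⟨i, k⟩ - hXi hYd
    have h1 : i ≤ Nx := by by_contra h; exact hXi (hX _ (by omega))
    have h2 : -1 - i + k ≤ Ny := by
      by_contra h; exact hYd (by rw [hY _ (by omega), dIter_zero])
    simp only [Finset.mem_product, Finset.mem_Icc, Finset.mem_range]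
    omega
  case m2 =>
    rintro ⟨j, k⟩ - hYj hXd
    have h1 : j ≤ Ny := by by_contra h; exact hYj (hY _ (by omega))
    have h2 : -1 - j + k ≤ Nx := by
      by_contra h; exact hXd (by rw [hX _ (by omega), dIter_zero])
    simp only [Finset.mem_product, Finset.mem_Icc, Finset.mem_range]
    omega
  have h2 : ∑ p ∈ Finset.Icc (-1 - Nx) Ny ×ˢ Finset.range K,
        gbinom p.1 p.2 • (Y p.1 * (⇑d)^[p.2] (X (-1 - p.1 + ↑p.2)))
      = ∑ p ∈ Finset.Icc (-1 - Ny) Nx ×ˢ Finset.range K,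
        gbinom (-1 - p.1 + ↑p.2) p.2 • (Y (-1 - p.1 + ↑p.2) * (⇑d)^[p.2] (X p.1)) := by
    refine Finset.sum_bij_ne_zero (fun p _ _ => (-1 - p.1 + ↑p.2, p.2)) ?_ ?_ ?_ ?_
    · rintro ⟨j, k⟩ h₁ h₂
      simp only [Finset.mem_product, Finset.mem_Icc, Finset.mem_range] at h₁
      have hYj : Y j ≠ 0 := fun h => h₂ (by simp [h])
      have hXw : X (-1 - j + ↑k) ≠ 0 := fun h => h₂ (by simp [h, dIter_zero])
      have b1 : j ≤ Ny := by by_contra h; exact hYj (hY _ (by omega))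
      have b2 : -1 - j + ↑k ≤ Nx := by by_contra h; exact hXw (hX _ (by omega))
      simp only [Finset.mem_product, Finset.mem_Icc, Finset.mem_range]
      omega
    · rintro ⟨j₁, k₁⟩ _m1 _h1 ⟨j₂, k₂⟩ _m2 _h2 hEQ
      simp only [Prod.mk.injEq] at hEQ
      obtain ⟨e1, e2⟩ := hEQ
      simp only [Prod.mk.injEq]
      exact ⟨by omega, by omega⟩
    · rintro ⟨i, k⟩ hb hgb
      dsimp only at hgb
      simp only [Finset.mem_product, Finset.mem_Icc, Finset.mem_range] at hb
      have hYw : Y (-1 - i + ↑k) ≠ 0 := fun h => hgb (by simp [h])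
      have hXi : X i ≠ 0 := fun h => hgb (by simp [h, dIter_zero])
      have b1 : -1 - i + ↑k ≤ Ny := by by_contra h; exact hYw (hY _ (by omega))
      have b2 : i ≤ Nx := by by_contra h; exact hXi (hX _ (by omega))
      have e : -1 - (-1 - i + (k : ℤ)) + ↑k = i := by ring
      refine ⟨(-1 - i + ↑k, k), ?_, ?_, ?_⟩
      · simp only [Finset.mem_product, Finset.mem_Icc, Finset.mem_range]
        omega
      · dsimp only; rw [e]; exact hgb
      · dsimp only; rw [e]
    · rintro ⟨j, k⟩ _ _
      dsimp only
      have e : -1 - (-1 - j + (k : ℤ)) + ↑k = j := by ring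
      rw [e]
  rw [h2, ← Finset.sum_sub_distrib]
  refine range_d_sum d ?_
  rintro ⟨i, k⟩ -
  have hg : gbinom (-1 - i + (k : ℤ)) k = (-1) ^ k * gbinom i k := by
    rw [show (-1 - i + (k : ℤ)) = -(i + 1 - k) by ring, gbinom_neg]
    congr 2; ring
  rw [hg]
  have key : gbinom i k • (X i * (⇑d)^[k] (Y (-1 - i + ↑k)))
        - ((-1) ^ k * gbinom i k) • (Y (-1 - i + ↑k) * (⇑d)^[k] (X i))
      = gbinom i k • ((X i * (⇑d)^[k] (Y (-1 - i + ↑k)))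
          - ((-1 : ℤ) ^ k) • ((⇑d)^[k] (X i) * Y (-1 - i + ↑k))) := by
    simp only [smul_sub, smul_smul, zsmul_eq_mul]
    push_cast; ring
  rw [key]
  exact range_d_zsmul d _ (ibp d k (X i) (Y (-1 - i + ↑k)))

lemma pdsPow_mul_comm {X : ℤ → A} (hX : PDSBdd X) (j : ℕ) :
    pdsMul ⇑d (pdsPow ⇑d X j) X = pdsMul ⇑d X (pdsPow ⇑d X j) := by
  induction j with
  | zero =>
    show pdsMul ⇑d pdsOne X = pdsMul ⇑d X pdsOne
    rw [pdsOne_mul, pdsMul_one]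
  | succ j ih =>
    show pdsMul ⇑d (pdsMul ⇑d (pdsPow ⇑d X j) X) X = _
    rw [ih, pdsMul_assoc d hX (hX.pow d j) hX]
    rfl

lemma pdsConj_pow {R : ℤ → A} (hR : PDSBdd R) : ∀ j, 1 ≤ j →
    pdsPow ⇑d (pdsConj ⇑d R) j = pdsConj ⇑d (pdsPow ⇑d R j) := by
  intro j hj
  induction j with
  | zero => omega
  | succ j ih =>
    rcases Nat.lt_or_ge j 1 with h1 | h1
    · have : j = 0 := by omega
      subst this
      show pdsMul ⇑d pdsOne (pdsConj ⇑d R) = pdsConj ⇑d (pdsMul ⇑d pdsOne R)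
      rw [pdsOne_mul, pdsOne_mul]
    · show pdsMul ⇑d (pdsPow ⇑d (pdsConj ⇑d R) j) (pdsConj ⇑d R) = _
      rw [ih h1, ← pdsConj_mul d hR (hR.pow d j)]
      show pdsConj ⇑d (pdsMul ⇑d R (pdsPow ⇑d R j))
        = pdsConj ⇑d (pdsMul ⇑d (pdsPow ⇑d R j) R)
      rw [pdsPow_mul_comm d hR j]

lemma pdsW_pow {S Sinv C : ℤ → A} (hS : PDSBdd S) (hSinv : PDSBdd Sinv) (hC : PDSBdd C)
    (hSl : pdsMul ⇑d S Sinv = pdsOne) (hSr : pdsMul ⇑d Sinv S = pdsOne) :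
    ∀ m, pdsPow ⇑d (pdsMul ⇑d (pdsMul ⇑d Sinv C) S) m
      = pdsMul ⇑d (pdsMul ⇑d Sinv (pdsPow ⇑d C m)) S := by
  intro m
  induction m with
  | zero =>
    show pdsOne = pdsMul ⇑d (pdsMul ⇑d Sinv pdsOne) S
    rw [pdsMul_one, hSr]
  | succ m ih =>
    show pdsMul ⇑d (pdsPow ⇑d (pdsMul ⇑d (pdsMul ⇑d Sinv C) S) m)
        (pdsMul ⇑d (pdsMul ⇑d Sinv C) S) = _
    rw [ih]
    have hCm : PDSBdd (pdsPow ⇑d C m) := hC.pow d m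
    have hSC : PDSBdd (pdsMul ⇑d Sinv C) := hSinv.mul d hC
    have hSCm : PDSBdd (pdsMul ⇑d Sinv (pdsPow ⇑d C m)) := hSinv.mul d hCm
    have hCS : PDSBdd (pdsMul ⇑d C S) := hC.mul d hS
    rw [pdsMul_assoc d hSinv hC hS]  -- (Sinv*C)*S = Sinv*(C*S)
    rw [pdsMul_assoc d hSCm hS (hSinv.mul d hCS)]
    -- S * (Sinv * (C*S)) = (S*Sinv)*(C*S) = C*S
    rw [← pdsMul_assoc d hS hSinv hCS, hSl, pdsOne_mul]
    rw [← pdsMul_assoc d hSCm hC hS]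
    rw [pdsMul_assoc d hSinv hCm hC]
    rfl

theorem res_pow_add_res_pow_mem_range_d' (R S Sinv R₂ : ℤ → A)
    (hR : PDSBdd R) (hS : PDSBdd S) (hSinv : PDSBdd Sinv)
    (hSl : pdsMul (⇑d) S Sinv = pdsOne) (hSr : pdsMul (⇑d) Sinv S = pdsOne)
    (hR₂ : R₂ = -(pdsMul (⇑d) (pdsMul (⇑d) Sinv (pdsConj (⇑d) R)) S)) :
    ∀ j : ℕ, 1 ≤ j →
      pdsRes (pdsPow (⇑d) R j) + ((-1 : ℤ) ^ j) • pdsRes (pdsPow (⇑d) R₂ j)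
        ∈ Set.range (⇑d) := by
  intro j hj
  have hCb : PDSBdd (pdsConj ⇑d R) := hR.conj d
  have hWb : PDSBdd (pdsMul ⇑d (pdsMul ⇑d Sinv (pdsConj ⇑d R)) S) :=
    (hSinv.mul d hCb).mul d hS
  have hW : R₂ = (-1 : ℤ) • (pdsMul ⇑d (pdsMul ⇑d Sinv (pdsConj ⇑d R)) S) := by
    rw [hR₂]; funext m; simp
  have hpow : pdsPow ⇑d R₂ j
      = ((-1 : ℤ) ^ j) • pdsPow ⇑d (pdsMul ⇑d (pdsMul ⇑d Sinv (pdsConj ⇑d R)) S) j := by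
    rw [hW]; exact pdsPow_zsmul d (-1) hWb j
  have hWform : pdsPow ⇑d (pdsMul ⇑d (pdsMul ⇑d Sinv (pdsConj ⇑d R)) S) j
      = pdsMul ⇑d (pdsMul ⇑d Sinv (pdsConj ⇑d (pdsPow ⇑d R j))) S := by
    rw [pdsW_pow d hS hSinv hCb hSl hSr j, pdsConj_pow d hR j hj]
  rw [hpow, hWform]
  have hres : pdsRes (((-1 : ℤ) ^ j) •
      (pdsMul ⇑d (pdsMul ⇑d Sinv (pdsConj ⇑d (pdsPow ⇑d R j))) S : ℤ → A))
      = ((-1 : ℤ) ^ j) • pdsRes (pdsMul ⇑d (pdsMul ⇑d Sinv (pdsConj ⇑d (pdsPow ⇑d R j))) S) :=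
    rfl
  rw [hres, smul_smul, show ((-1 : ℤ) ^ j) * ((-1 : ℤ) ^ j) = 1 by
      rw [← pow_add]; exact Even.neg_one_pow ⟨j, rfl⟩, one_smul]
  have hGb : PDSBdd (pdsMul ⇑d Sinv (pdsConj ⇑d (pdsPow ⇑d R j))) :=
    hSinv.mul d ((hR.pow d j).conj d)
  have hSG : pdsRes (pdsMul ⇑d S (pdsMul ⇑d Sinv (pdsConj ⇑d (pdsPow ⇑d R j))))
      = - pdsRes (pdsPow ⇑d R j) := by
    rw [← pdsMul_assoc d hS hSinv ((hR.pow d j).conj d), hSl, pdsOne_mul, pdsRes_conj]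
  have heq : pdsRes (pdsPow ⇑d R j)
        + pdsRes (pdsMul ⇑d (pdsMul ⇑d Sinv (pdsConj ⇑d (pdsPow ⇑d R j))) S)
      = pdsRes (pdsMul ⇑d (pdsMul ⇑d Sinv (pdsConj ⇑d (pdsPow ⇑d R j))) S)
        - pdsRes (pdsMul ⇑d S (pdsMul ⇑d Sinv (pdsConj ⇑d (pdsPow ⇑d R j)))) := by
    rw [hSG]; ring
  rw [heq]
  exact res_mul_comm d hGb hS

/-- with `S` invertible and `R₂ = −S⁻¹ R⁺ S`, for every `j ≥ 1`
one has `res(R^j) + (−1)^j res(R₂^j) ∈ Im D`. -/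
theorem res_pow_add_res_pow_mem_range_d (d : Derivation ℤ A A) (R S Sinv R₂ : ℤ → A)
    (hR : PDSBdd R) (hS : PDSBdd S) (hSinv : PDSBdd Sinv)
    (hSl : pdsMul (⇑d) S Sinv = pdsOne) (hSr : pdsMul (⇑d) Sinv S = pdsOne)
    (hR₂ : R₂ = -(pdsMul (⇑d) (pdsMul (⇑d) Sinv (pdsConj (⇑d) R)) S)) :
    ∀ j : ℕ, 1 ≤ j →
      pdsRes (pdsPow (⇑d) R j) + ((-1 : ℤ) ^ j) • pdsRes (pdsPow (⇑d) R₂ j)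
        ∈ Set.range (⇑d) := by
  exact res_pow_add_res_pow_mem_range_d' d R S Sinv R₂ hR hS hSinv hSl hSr hR₂

end
end

section
/- For the Boussinesq system u_t = v, v_t = u4 + 2 u1 u2, the function ρ = u1 v is a conserved density: D_t(u1 v) = D( ½ v² + u1 u3 − ½ u2² + (2/3) u1³ ). -/
/-- for the Boussinesq system `u_t = v, v_t = u₄ + 2 u₁ u₂`
(formulated in a ring `A` of differential polynomials in the jet variables
`u i`, `v i`, with total `x`-derivative `D` and total `t`-derivative `Dt`),
the function `ρ = u₁ v` is a conserved density:
`D_t(u₁ v) = D(½ v² + u₁ u₃ − ½ u₂² + (2/3) u₁³)`. -/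
theorem boussinesq_conserved_density_u1v
    {A : Type*} [CommRing A] [Algebra ℚ A]
    (D Dt : Derivation ℚ A A) (u v : ℕ → A)
    (hDu : ∀ i, D (u i) = u (i + 1)) (hDv : ∀ i, D (v i) = v (i + 1))
    (hDtu : ∀ i, Dt (u i) = v i)
    (hDtv : ∀ i, Dt (v i) = (⇑D)^[i] (u 4 + 2 * u 1 * u 2)) :
    Dt (u 1 * v 0)
      = D ((1/2 : ℚ) • (v 0) ^ 2 + u 1 * u 3 - (1/2 : ℚ) • (u 2) ^ 2
          + (2/3 : ℚ) • (u 1) ^ 3) := by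
  simp only [map_add, map_sub, map_smul, Derivation.map_smul, Derivation.leibniz, Derivation.leibniz_pow,
    hDu, hDv, hDtu, hDtv, Function.iterate_zero, id_eq, map_mul, map_ofNat, smul_eq_mul]
  have c2 : algebraMap ℚ A (1/2) * 2 = 1 := by
    rw [← map_ofNat (algebraMap ℚ A) 2, ← map_mul, show (1/2 : ℚ) * 2 = 1 by norm_num, map_one]
  have c3 : algebraMap ℚ A (2/3) * 3 = 2 := by
    rw [← map_ofNat (algebraMap ℚ A) 3, ← map_mul, show (2/3 : ℚ) * 3 = 2 by norm_num,
      map_ofNat]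
  simp only [Algebra.smul_def, map_ofNat]
  linear_combination (u 2 * u 3 - v 0 * v 1) * c2 + (- (u 1 ^ 2 * u 2)) * c3
end

section
/- For the system u_t = v, v_t = u4 + 2 u2 v + 2 u1² u2, both ρ₁ = v + u1² and ρ₂ = (2/3) u1³ + 2 u1 v are conserved densities; explicitly D_t ρ₁ = D( u3 + 2 u1 v + (2/3) u1³ ) and D_t ρ₂ = D( v² + 2 u1 u3 − u2² + 2 u1² v + u1⁴ ). -/
lemma gu3_aux_d_two {A : Type*} [CommRing A] [Algebra ℚ A]
    (D : Derivation ℚ A A) : D (2 : A) = 0 := by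
  rw [show (2 : A) = ((2 : ℕ) : A) by norm_num, Derivation.map_natCast]

lemma gu3_aux_cube {A : Type*} [CommRing A] [Algebra ℚ A]
    (d : Derivation ℚ A A) (x : A) :
    d ((2/3 : ℚ) • x ^ 3) = 2 * (x ^ 2 * d x) := by
  rw [Derivation.map_smul, Derivation.leibniz_pow, ← Nat.cast_smul_eq_nsmul ℚ, smul_smul]
  norm_num
  rw [two_smul, two_mul]

/-- for the system `u_t = v, v_t = u₄ + 2 u₂ v + 2 u₁² u₂`, both
`ρ₁ = v + u₁²` and `ρ₂ = (2/3) u₁³ + 2 u₁ v` are conserved densities: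
`D_t ρ₁ = D(u₃ + 2 u₁ v + (2/3) u₁³)` and
`D_t ρ₂ = D(v² + 2 u₁ u₃ − u₂² + 2 u₁² v + u₁⁴)`. -/
theorem gu3_conserved_densities
    {A : Type*} [CommRing A] [Algebra ℚ A]
    (D Dt : Derivation ℚ A A) (u v : ℕ → A)
    (hDu : ∀ i, D (u i) = u (i + 1)) (hDv : ∀ i, D (v i) = v (i + 1))
    (hDtu : ∀ i, Dt (u i) = v i)
    (hDtv : ∀ i, Dt (v i) =
      (⇑D)^[i] (u 4 + 2 * u 2 * v 0 + 2 * (u 1) ^ 2 * u 2)) :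
    Dt (v 0 + (u 1) ^ 2) = D (u 3 + 2 * u 1 * v 0 + (2/3 : ℚ) • (u 1) ^ 3) ∧
    Dt ((2/3 : ℚ) • (u 1) ^ 3 + 2 * u 1 * v 0)
      = D ((v 0) ^ 2 + 2 * u 1 * u 3 - (u 2) ^ 2 + 2 * (u 1) ^ 2 * v 0
          + (u 1) ^ 4) := by
  constructor <;>
  · simp only [map_add, map_sub, map_smul, Derivation.leibniz, Derivation.leibniz_pow,
      hDu, hDv, hDtu, hDtv, Function.iterate_zero, id_eq, smul_eq_mul, nsmul_eq_mul,
      gu3_aux_cube, gu3_aux_d_two]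
    norm_num
    ring
end

section
/- For the system u_t = v, v_t = u4 + u2², both ρ₁ = u2 v1 and ρ₂ = v1² − u3² + (2/3) u2³ are conserved densities; explicitly D_t ρ₁ = D( ½ v1² + u2 u4 − ½ u3² + (2/3) u2³ ) and D_t ρ₂ = D( 2 u4 v1 − 2 u3 v2 + 2 u2² v1 ). -/
/-- Auxiliary: `(1/2 : ℚ) • (2 * z) = z`. -/
lemma gu1_half_smul {A : Type*} [CommRing A] [Algebra ℚ A] (z : A) :
    (1/2 : ℚ) • ((2 : A) * z) = z := by
  rw [show (2:A) = ((2:ℕ):A) by norm_num, ← nsmul_eq_mul, ← Nat.cast_smul_eq_nsmul ℚ, smul_smul]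
  norm_num

/-- Auxiliary: `(2/3 : ℚ) • (3 * z) = 2 * z`. -/
lemma gu1_third_smul {A : Type*} [CommRing A] [Algebra ℚ A] (z : A) :
    (2/3 : ℚ) • ((3 : A) * z) = 2 * z := by
  rw [show (3:A) = ((3:ℕ):A) by norm_num, ← nsmul_eq_mul, ← Nat.cast_smul_eq_nsmul ℚ, smul_smul]
  norm_num
  rw [show ((2:ℚ)) • z = (((2:ℕ):ℚ)) • z by norm_num, Nat.cast_smul_eq_nsmul, nsmul_eq_mul]
  norm_num

/-- for the system `u_t = v, v_t = u₄ + u₂²`, both `ρ₁ = u₂ v₁`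
and `ρ₂ = v₁² − u₃² + (2/3) u₂³` are conserved densities:
`D_t ρ₁ = D(½ v₁² + u₂ u₄ − ½ u₃² + (2/3) u₂³)` and
`D_t ρ₂ = D(2 u₄ v₁ − 2 u₃ v₂ + 2 u₂² v₁)`. -/
theorem gu1_conserved_densities
    {A : Type*} [CommRing A] [Algebra ℚ A]
    (D Dt : Derivation ℚ A A) (u v : ℕ → A)
    (hDu : ∀ i, D (u i) = u (i + 1)) (hDv : ∀ i, D (v i) = v (i + 1))
    (hDtu : ∀ i, Dt (u i) = v i)
    (hDtv : ∀ i, Dt (v i) = (⇑D)^[i] (u 4 + (u 2) ^ 2)) :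
    Dt (u 2 * v 1)
      = D ((1/2 : ℚ) • (v 1) ^ 2 + u 2 * u 4 - (1/2 : ℚ) • (u 3) ^ 2
          + (2/3 : ℚ) • (u 2) ^ 3) ∧
    Dt ((v 1) ^ 2 - (u 3) ^ 2 + (2/3 : ℚ) • (u 2) ^ 3)
      = D (2 * u 4 * v 1 - 2 * u 3 * v 2 + 2 * (u 2) ^ 2 * v 1) := by
  have hD2 : D (2:A) = 0 := by
    rw [show (2:A) = 1+1 by norm_num, map_add, Derivation.map_one_eq_zero, add_zero]
  have h1 : Dt (v 1) = u 5 + 2 * u 2 * u 3 := by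
    rw [hDtv]
    simp [Derivation.leibniz, Derivation.leibniz_pow, hDu, smul_eq_mul]
    ring
  have h2 : Dt (v 2) = u 6 + 2 * u 3 ^ 2 + 2 * u 2 * u 4 := by
    rw [hDtv]
    simp [Function.iterate_succ_apply', Derivation.leibniz, Derivation.leibniz_pow, hDu, hD2,
      smul_eq_mul]
    ring
  constructor
  · simp only [Derivation.leibniz, Derivation.leibniz_pow, map_add, map_sub,
      Derivation.map_smul, hD2, hDu, hDv, hDtu, h1, h2, zero_mul, mul_zero, zero_add, add_zero]
    norm_num
    simp only [gu1_half_smul, gu1_third_smul]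
    ring
  · simp only [Derivation.leibniz, Derivation.leibniz_pow, map_add, map_sub,
      Derivation.map_smul, hD2, hDu, hDv, hDtu, h1, h2, zero_mul, mul_zero, zero_add, add_zero]
    norm_num
    simp only [gu1_half_smul, gu1_third_smul]
    ring
end

section
/- The system u_t = v, v_t = u4 + 4 u1 v1 + 2 u2 v − 6 u1² u2 is Hamiltonian with operator H₁ = [[0, 1], [−1, 4 u1 D + 2 u2]] and Hamiltonian density H = ½ v² − ½ u2² − ½ u1⁴: that is, δH/δv = v and −δH/δu + (4 u1 D + 2 u2)(δH/δv) = u4 + 4 u1 v1 + 2 u2 v − 6 u1² u2. -/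
/-- the system `u_t = v, v_t = u₄ + 4 u₁ v₁ + 2 u₂ v − 6 u₁² u₂`
is Hamiltonian with operator `H₁ = [[0, 1], [−1, 4 u₁ D + 2 u₂]]` and density
`H = ½ v² − ½ u₂² − ½ u₁⁴`: with variational derivatives
`δH/δv = ∑ (−D)^i ∂H/∂v_i = v` (since `∂H/∂v₀ = v`) and
`δH/δu = ∑ (−D)^i ∂H/∂u_i` (since `∂H/∂u₁ = −2u₁³`, `∂H/∂u₂ = −u₂`),
one has `δH/δv = v` and
`−δH/δu + (4 u₁ D + 2 u₂)(δH/δv) = u₄ + 4 u₁ v₁ + 2 u₂ v − 6 u₁² u₂`. -/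
theorem gu4_hamiltonian_form
    {A : Type*} [CommRing A] [Algebra ℚ A]
    (D : Derivation ℚ A A) (u v : ℕ → A)
    (hDu : ∀ i, D (u i) = u (i + 1)) (hDv : ∀ i, D (v i) = v (i + 1)) :
    (fun a => -(D a))^[0] (v 0) = v 0 ∧
    -((fun a => -(D a))^[1] (-(2 * (u 1) ^ 3)) + (fun a => -(D a))^[2] (-(u 2)))
        + (4 * u 1 * D (v 0) + 2 * u 2 * v 0)
      = u 4 + 4 * u 1 * v 1 + 2 * u 2 * v 0 - 6 * (u 1) ^ 2 * u 2 := by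
  refine ⟨rfl, ?_⟩
  simp only [Function.iterate_succ, Function.iterate_zero, Function.comp_apply, id,
    map_neg, map_mul, map_pow, Derivation.leibniz, Derivation.leibniz_pow, hDu, hDv, smul_eq_mul]
  rw [show (2:A) = ((2:ℕ):A) by norm_num, Derivation.map_natCast]
  ring
end

section
/- For the system u_t = v, v_t = F with F = u4 + 2 u2 v + 2 u1² u2, the pair s = (s¹, s²) with s¹ = v2 + ½ u2² + u1² v + ½ v² + (1/6) u1⁴ and s² = u6 + 3 u2 v2 + 4 u3 v1 + 3 v u4 + 3 u1² u4 + 2 u1 v v1 + (2/3) u1³ v1 + 12 u1 u2 u3 + 4 u1² u2 v + 2 u2 v² + 2 u1⁴ u2 + 4 u2³ is an infinitesimal symmetry: D_t(s¹) = s² and D_t(s²) = Σ_{i=0}^{4} (∂F/∂u_i) D^i(s¹) + (∂F/∂v) s². -/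
section GuAux
variable {A : Type*} [CommRing A] [Algebra ℚ A]

theorem gu3_smul3 (x : A) : (3:ℚ) • x = 3 * x := by
  rw [show (3:ℚ) = ((3:ℕ):ℚ) by norm_num, Nat.cast_smul_eq_nsmul, nsmul_eq_mul]; norm_num

theorem gu3_smul4 (x : A) : (4:ℚ) • x = 4 * x := by
  rw [show (4:ℚ) = ((4:ℕ):ℚ) by norm_num, Nat.cast_smul_eq_nsmul, nsmul_eq_mul]; norm_num

theorem gu3_smul6 (x : A) : (6:ℚ) • x = 6 * x := by
  rw [show (6:ℚ) = ((6:ℕ):ℚ) by norm_num, Nat.cast_smul_eq_nsmul, nsmul_eq_mul]; norm_num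

theorem gu3_d2 (D : Derivation ℚ A A) : D (2:A) = 0 := by
  rw [show (2:A) = ((2:ℕ):A) by norm_num]; exact D.map_natCast _
theorem gu3_d3 (D : Derivation ℚ A A) : D (3:A) = 0 := by
  rw [show (3:A) = ((3:ℕ):A) by norm_num]; exact D.map_natCast _
theorem gu3_d4 (D : Derivation ℚ A A) : D (4:A) = 0 := by
  rw [show (4:A) = ((4:ℕ):A) by norm_num]; exact D.map_natCast _
theorem gu3_d6 (D : Derivation ℚ A A) : D (6:A) = 0 := by
  rw [show (6:A) = ((6:ℕ):A) by norm_num]; exact D.map_natCast _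
theorem gu3_d12 (D : Derivation ℚ A A) : D (12:A) = 0 := by
  rw [show (12:A) = ((12:ℕ):A) by norm_num]; exact D.map_natCast _
theorem gu3_d18 (D : Derivation ℚ A A) : D (18:A) = 0 := by
  rw [show (18:A) = ((18:ℕ):A) by norm_num]; exact D.map_natCast _
theorem gu3_d24 (D : Derivation ℚ A A) : D (24:A) = 0 := by
  rw [show (24:A) = ((24:ℕ):A) by norm_num]; exact D.map_natCast _
theorem gu3_d72 (D : Derivation ℚ A A) : D (72:A) = 0 := by
  rw [show (72:A) = ((72:ℕ):A) by norm_num]; exact D.map_natCast _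

theorem gu3_six_smul_inj {x y : A} (h : (6:ℚ) • x = (6:ℚ) • y) : x = y := by
  have := congrArg (fun z => (1/6:ℚ) • z) h
  simpa [smul_smul] using this

theorem gu3_iterate_smul (D : Derivation ℚ A A) (k : ℕ) (x : A) :
    (⇑D)^[k] ((6:ℚ) • x) = (6:ℚ) • (⇑D)^[k] x := by
  induction k generalizing x with
  | zero => simp
  | succ n ih => rw [Function.iterate_succ_apply', Function.iterate_succ_apply', ih,
      Derivation.map_smul]
end GuAux

/-- for the system `u_t = v, v_t = F` with
`F = u₄ + 2 u₂ v + 2 u₁² u₂`, the pair `s = (s¹, s²)` below is an infinitesimal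
symmetry: `D_t(s¹) = s²` and
`D_t(s²) = ∑_{i=0}^{4} (∂F/∂u_i) D^i(s¹) + (∂F/∂v) s²`, where
`∂F/∂u₁ = 4u₁u₂`, `∂F/∂u₂ = 2v + 2u₁²`, `∂F/∂u₄ = 1`, `∂F/∂v = 2u₂`
(all other partial derivatives of `F` vanish). -/
theorem gu3_symmetry
    {A : Type*} [CommRing A] [Algebra ℚ A]
    (D Dt : Derivation ℚ A A) (u v : ℕ → A)
    (hDu : ∀ i, D (u i) = u (i + 1)) (hDv : ∀ i, D (v i) = v (i + 1))
    (hDtu : ∀ i, Dt (u i) = v i)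
    (hDtv : ∀ i, Dt (v i) =
      (⇑D)^[i] (u 4 + 2 * u 2 * v 0 + 2 * (u 1) ^ 2 * u 2))
    (s1 s2 : A)
    (hs1 : s1 = v 2 + (1/2 : ℚ) • (u 2) ^ 2 + (u 1) ^ 2 * v 0
        + (1/2 : ℚ) • (v 0) ^ 2 + (1/6 : ℚ) • (u 1) ^ 4)
    (hs2 : s2 = u 6 + 3 * u 2 * v 2 + 4 * u 3 * v 1 + 3 * v 0 * u 4
        + 3 * (u 1) ^ 2 * u 4 + 2 * u 1 * v 0 * v 1
        + (2/3 : ℚ) • ((u 1) ^ 3 * v 1) + 12 * u 1 * u 2 * u 3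
        + 4 * (u 1) ^ 2 * u 2 * v 0 + 2 * u 2 * (v 0) ^ 2
        + 2 * (u 1) ^ 4 * u 2 + 4 * (u 2) ^ 3) :
    Dt s1 = s2 ∧
    Dt s2 = 4 * u 1 * u 2 * D s1 + (2 * v 0 + 2 * (u 1) ^ 2) * (⇑D)^[2] s1
        + (⇑D)^[4] s1 + 2 * u 2 * s2 := by
  have h1 : (6:ℚ) • s1 = 6 * v 2 + 3 * (u 2)^2 + 6 * (u 1)^2 * v 0
      + 3 * (v 0)^2 + (u 1)^4 := by
    rw [hs1]
    simp only [smul_add, smul_smul]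
    norm_num [gu3_smul3, gu3_smul6]
    ring
  have h2 : (6:ℚ) • s2 = 6 * u 6 + 18 * u 2 * v 2 + 24 * u 3 * v 1
      + 18 * v 0 * u 4 + 18 * (u 1)^2 * u 4 + 12 * u 1 * v 0 * v 1
      + 4 * (u 1)^3 * v 1 + 72 * u 1 * u 2 * u 3 + 24 * (u 1)^2 * u 2 * v 0
      + 12 * u 2 * (v 0)^2 + 12 * (u 1)^4 * u 2 + 24 * (u 2)^3 := by
    rw [hs2]
    simp only [smul_add, smul_smul]
    norm_num [gu3_smul4, gu3_smul6]
    ring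
  constructor
  · apply gu3_six_smul_inj
    rw [← Derivation.map_smul, h1, h2]
    simp only [map_add, Derivation.leibniz, Derivation.leibniz_pow, smul_eq_mul,
      nsmul_eq_mul, gu3_d2, gu3_d3, gu3_d4, gu3_d6, gu3_d12, gu3_d18, gu3_d24, gu3_d72, hDu, hDv, hDtu, hDtv,
      Function.iterate_succ_apply', Function.iterate_zero_apply,
      mul_zero, zero_mul, zero_add, add_zero, Nat.cast_ofNat,
      Derivation.map_one_eq_zero, map_zero]
    norm_num [gu3_d2, gu3_d3, gu3_d4, gu3_d6]
    ring
  · apply gu3_six_smul_inj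
    have hA : (6:ℚ) • D s1 = D (6 * v 2 + 3 * (u 2)^2 + 6 * (u 1)^2 * v 0
        + 3 * (v 0)^2 + (u 1)^4) := by rw [← Derivation.map_smul, h1]
    have hB : (6:ℚ) • (⇑D)^[2] s1 = (⇑D)^[2] (6 * v 2 + 3 * (u 2)^2
        + 6 * (u 1)^2 * v 0 + 3 * (v 0)^2 + (u 1)^4) := by
      rw [← gu3_iterate_smul, h1]
    have hC : (6:ℚ) • (⇑D)^[4] s1 = (⇑D)^[4] (6 * v 2 + 3 * (u 2)^2
        + 6 * (u 1)^2 * v 0 + 3 * (v 0)^2 + (u 1)^4) := by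
      rw [← gu3_iterate_smul, h1]
    rw [← Derivation.map_smul, h2]
    rw [smul_add, smul_add, smul_add, ← mul_smul_comm, ← mul_smul_comm,
      ← mul_smul_comm, hA, hB, hC, h2]
    simp only [map_add, Derivation.leibniz, Derivation.leibniz_pow, smul_eq_mul,
      nsmul_eq_mul, gu3_d2, gu3_d3, gu3_d4, gu3_d6, gu3_d12, gu3_d18, gu3_d24, gu3_d72, hDu, hDv, hDtu, hDtv,
      Function.iterate_succ_apply', Function.iterate_zero_apply,
      mul_zero, zero_mul, zero_add, add_zero, Nat.cast_ofNat,
      Derivation.map_one_eq_zero, map_zero]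
    norm_num [gu3_d2, gu3_d3, gu3_d4, gu3_d6]
    ring
end
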